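/- arXiv:0908.4071 — 9 statements merged into one kernel-verified Lean document; each statement's English description precedes it below -/
import Mathlib

section
/- If an m-by-s integer matrix U is weakly unimodular (every maximal square, i.e. s-by-s, submatrix has determinant in {-1,0,1}) and contains the s-by-s identity matrix as a submatrix (on some set of s rows), then U is totally unimodular. -/
/-- An integer matrix is totally unimodular if every square submatrix has
determinant in `{-1, 0, 1}`. -/
def IsTU {m n : Type*} [Fintype m] [Fintype n] (M : Matrix m n ℤ) : Prop :=
  ∀ (k : ℕ) (f : Fin k → m) (g : Fin k → n),
    (M.submatrix f g).det ∈ ({-1, 0, 1} : Set ℤ)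

/-- If an `m×s` integer matrix is weakly unimodular (every `s×s` submatrix has
determinant in `{-1,0,1}`) and contains `I_s` as a submatrix, then it is TU. -/
theorem stmt0 {m s : ℕ} (U : Matrix (Fin m) (Fin s) ℤ)
    (hWU : ∀ f : Fin s → Fin m, (U.submatrix f id).det ∈ ({-1, 0, 1} : Set ℤ))
    (hI : ∃ f : Fin s → Fin m, Function.Injective f ∧ U.submatrix f id = 1) :
    IsTU U := by
  obtain ⟨f, -, hf⟩ := hI
  have hUf : ∀ a b : Fin s, U (f a) b = if a = b then 1 else 0 := by
    intro a b
    have := congrFun (congrFun hf a) b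
    simpa [Matrix.submatrix, Matrix.one_apply] using this
  intro k rows cols
  by_cases hinj : Function.Injective cols
  · -- build an s×s matrix whose determinant equals that of the submatrix
    classical
    set r : Fin s → Fin m := fun j =>
      if h : ∃ i, cols i = j then rows h.choose else f j with hr
    have hrc : ∀ i : Fin k, r (cols i) = rows i := by
      intro i
      have h : ∃ i', cols i' = cols i := ⟨i, rfl⟩
      simp only [hr, dif_pos h]
      exact congrArg rows (hinj h.choose_spec)
    set M : Matrix (Fin s) (Fin s) ℤ := U.submatrix r id with hM
    set p : Fin s → Prop := fun j => j ∈ Set.range cols with hp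
    have : ∀ j, Decidable (p j) := fun j => by
      exact inferInstanceAs (Decidable (j ∈ Set.range cols))
    let e : {j // p j} ⊕ {j // ¬ p j} ≃ Fin s := Equiv.sumCompl p
    have hdet1 : M.det = (M.submatrix e e).det :=
      (Matrix.det_submatrix_equiv_self e M).symm
    -- the reindexed matrix is block upper triangular
    have hblock : M.submatrix e e =
        Matrix.fromBlocks
          (M.submatrix (Subtype.val : {j // p j} → Fin s) (Subtype.val : {j // p j} → Fin s))
          (M.submatrix (Subtype.val : {j // p j} → Fin s) (Subtype.val : {j // ¬ p j} → Fin s))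
          0 (1 : Matrix {j // ¬ p j} {j // ¬ p j} ℤ) := by
      ext x y
      cases x with
      | inl i =>
        cases y with
        | inl j => rfl
        | inr j => rfl
      | inr i =>
        have hri : r i.1 = f i.1 := by
          have : ¬ ∃ i', cols i' = i.1 := fun ⟨i', hi'⟩ => i.2 ⟨i', hi'⟩
          simp [hr, this]
        cases y with
        | inl j =>
          obtain ⟨j', hj'⟩ := j.2
          have : M i.1 j.1 = 0 := by
            rw [hM]
            simp only [Matrix.submatrix_apply, id, hri, hUf]
            have : i.1 ≠ j.1 := fun h => i.2 (h ▸ j.2)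
            simp [this]
          simpa [Matrix.fromBlocks, e, Equiv.sumCompl] using this
        | inr j =>
          have : M i.1 j.1 = if i = j then 1 else 0 := by
            rw [hM]
            simp only [Matrix.submatrix_apply, id, hri, hUf]
            by_cases h : i = j
            · simp [h]
            · have : i.1 ≠ j.1 := fun hh => h (Subtype.ext hh)
              simp [h, this]
          simpa [Matrix.fromBlocks, e, Equiv.sumCompl, Matrix.one_apply] using this
    have hA : ∀ i j : {j // p j}, ∃ hi : ∃ i', cols i' = i.1, True := by
      intro i j; exact ⟨i.2, trivial⟩
    -- determinant of top-left block equals submatrix determinant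
    let φ : Fin k ≃ {j // p j} := Equiv.ofInjective cols hinj
    have hAdet : Matrix.det (M.submatrix (Subtype.val : {j // p j} → Fin s) (Subtype.val : {j // p j} → Fin s)) =
        (U.submatrix rows cols).det := by
      rw [← Matrix.det_submatrix_equiv_self φ]
      congr 1
      ext i j
      have hφ : (φ i).1 = cols i := rfl
      simp only [Matrix.submatrix_apply, hM, hφ, id]
      rw [hrc i]
      rfl
    have hfinal : (U.submatrix rows cols).det = M.det := by
      rw [hdet1, hblock, Matrix.det_fromBlocks_zero₂₁, Matrix.det_one, mul_one, hAdet]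
    rw [hfinal]
    exact hWU r
  · -- non-injective columns: determinant is zero
    rw [Function.not_injective_iff] at hinj
    obtain ⟨i, j, hij, hne⟩ := hinj
    have : (U.submatrix rows cols).det = 0 :=
      Matrix.det_zero_of_column_eq hne (fun a => by simp [Matrix.submatrix_apply, hij])
    rw [this]
    simp
end

section
/- Let M be a totally unimodular matrix and β a nonzero integer vector in the kernel of M whose support is a circuit of the column matroid of M. Then all nonzero coordinates of β have the same absolute value. -/
open Matrix in

lemma aux_sub_det {r k : ℕ} (A : Matrix (Fin r) (Fin k) ℚ)
    (hA : LinearIndependent ℚ (fun q : Fin k => fun i => A i q)) :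
    ∃ ρ : Fin k → Fin r, (A.submatrix ρ id).det ≠ 0 := by
  have hAt : LinearIndependent ℚ (fun q : Fin k => Aᵀ q) := hA
  have hrank : A.rank = k := by
    rw [← Matrix.rank_transpose]
    exact hAt.rank_matrix.trans (Fintype.card_fin k)
  have hspan : Submodule.span ℚ (Set.range A) = ⊤ := by
    apply Submodule.eq_top_of_finrank_eq
    rw [show Set.range A = Set.range A.row from rfl, ← Matrix.rank_eq_finrank_span_row, hrank, Module.finrank_fintype_fun_eq_card,
      Fintype.card_fin]
  obtain ⟨b, hb_sub, hb_span, hb_ind⟩ := exists_linearIndependent ℚ (Set.range A)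
  rw [hspan] at hb_span
  have hbasis : Module.Basis b ℚ (Fin k → ℚ) :=
    Module.Basis.mk hb_ind (by rw [Subtype.range_coe]; rw [hb_span])
  haveI : Fintype b := FiniteDimensional.fintypeBasisIndex hbasis
  have hcard : Fintype.card b = k := by
    have h := Module.finrank_eq_card_basis hbasis
    rw [Module.finrank_fintype_fun_eq_card, Fintype.card_fin] at h
    omega
  let e : Fin k ≃ b := (Fintype.equivFinOfCardEq hcard).symm
  have hex : ∀ q : Fin k, ∃ i, A i = ↑(e q) := fun q => hb_sub (e q).2
  choose ρ hρ using hex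
  refine ⟨ρ, ?_⟩
  have hrows : LinearIndependent ℚ (fun q => (A.submatrix ρ id) q) := by
    have heq : (fun q => (A.submatrix ρ id) q) = (fun x : b => (x : Fin k → ℚ)) ∘ e := by
      funext q
      ext j
      simp [Matrix.submatrix_apply, hρ q]
    rw [heq]
    exact hb_ind.comp e e.injective
  have hu : IsUnit (A.submatrix ρ id) := Matrix.linearIndependent_rows_iff_isUnit.mp hrows
  have := (Matrix.isUnit_iff_isUnit_det _).mp hu
  exact this.ne_zero



/-- A set of columns of `M` is dependent if the columns are linearly dependent over `ℚ`. -/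
def ColDep {m n : Type*} [Fintype m] (M : Matrix m n ℤ) (C : Set n) : Prop :=
  ¬ LinearIndependent ℚ (fun j : C => fun i => (M i j : ℚ))

/-- A circuit of the column matroid of `M` is a minimal dependent set of columns. -/
def IsCircuit {m n : Type*} [Fintype m] (M : Matrix m n ℤ) (C : Set n) : Prop :=
  ColDep M C ∧ ∀ C' ⊂ C, ¬ ColDep M C'

/-- A simple flow of `M` is a nonzero integer vector in `ker M` with entries in
`{-1,0,1}` whose support is a circuit of the column matroid of `M`. -/
def IsSimpleFlow {m n : Type*} [Fintype m] [Fintype n] (M : Matrix m n ℤ) (α : n → ℤ) : Prop :=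
  α ≠ 0 ∧ M.mulVec α = 0 ∧ (∀ e, α e = -1 ∨ α e = 0 ∨ α e = 1) ∧
    IsCircuit M {e | α e ≠ 0}

/-- If `β` is a nonzero integer vector in the kernel of a TU matrix `M` whose support
is a circuit of the column matroid of `M`, then all nonzero coordinates of `β` have
the same absolute value. -/
theorem stmt2 {r m : ℕ} (M : Matrix (Fin r) (Fin m) ℤ) (hTU : IsTU M)
    (β : Fin m → ℤ) (hβ : β ≠ 0) (hker : M.mulVec β = 0)
    (hC : IsCircuit M {e | β e ≠ 0}) :
    ∀ e f : Fin m, β e ≠ 0 → β f ≠ 0 → |β e| = |β f| := by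
  intro e f he hf
  by_cases hef : e = f
  · rw [hef]
  -- support finset and its erase
  classical
  set S : Finset (Fin m) := (Finset.univ.filter fun j => β j ≠ 0).erase e with hS
  have hmemS : ∀ j, j ∈ S ↔ (β j ≠ 0 ∧ j ≠ e) := by
    intro j
    simp [hS, Finset.mem_erase, and_comm]
  have hfS : f ∈ S := (hmemS f).mpr ⟨hf, fun h => hef h.symm⟩
  -- independence of columns over S
  have hssub : (↑S : Set (Fin m)) ⊂ {j | β j ≠ 0} := by
    constructor
    · intro j hj
      exact ((hmemS j).mp hj).1
    · intro hsub
      have := hsub he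
      exact ((hmemS e).mp this).2 rfl
  have hindS : LinearIndependent ℚ (fun j : (↑S : Set (Fin m)) => fun i => (M i j : ℚ)) :=
    not_not.mp (hC.2 _ hssub)
  set k := S.card with hk
  let g : Fin k ≃ S := S.equivFin.symm
  -- the rational matrix with columns indexed by S
  let A : Matrix (Fin r) (Fin k) ℚ := fun i q => (M i (g q) : ℚ)
  have hAind : LinearIndependent ℚ (fun q : Fin k => fun i => A i q) := by
    have : (fun q : Fin k => fun i => A i q)
        = (fun j : (↑S : Set (Fin m)) => fun i => (M i j : ℚ)) ∘
          (fun q : Fin k => (⟨(g q : Fin m), (g q).2⟩ : (↑S : Set (Fin m)))) := rfl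
    rw [this]
    refine hindS.comp _ ?_
    intro a b hab
    have : (g a : Fin m) = (g b : Fin m) := congrArg Subtype.val hab
    exact g.injective (Subtype.ext this)
  obtain ⟨ρ, hρ⟩ := aux_sub_det A hAind
  -- the integer square matrix
  set B : Matrix (Fin k) (Fin k) ℤ := M.submatrix ρ (fun q => (g q : Fin m)) with hB
  have hBmap : (B.map (Int.castRingHom ℚ)) = A.submatrix ρ id := rfl
  have hBdet : B.det ≠ 0 := by
    intro h0
    apply hρ
    rw [← hBmap]
    show ((Int.castRingHom ℚ).mapMatrix B).det = 0
    rw [← RingHom.map_det, h0]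
    simp
  have hBdetTU : B.det ∈ ({-1, 0, 1} : Set ℤ) := hTU k ρ _
  have hBdet1 : |B.det| = 1 := by
    rcases hBdetTU with h | h | h <;> simp_all
  -- the kernel equation restricted to rows ρ
  set x : Fin k → ℤ := fun q => β (g q) with hx
  have hrow : ∀ i : Fin r, ∑ j : Fin m, M i j * β j = 0 := by
    intro i
    have := congrFun hker i
    simpa [Matrix.mulVec, dotProduct] using this
  have hsumS : ∀ i : Fin r, ∑ j ∈ S, M i j * β j = -(β e) * M i e := by
    intro i
    have h1 : ∑ j : Fin m, M i j * β j
        = ∑ j ∈ (Finset.univ.filter fun j => β j ≠ 0), M i j * β j := by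
      rw [Finset.sum_filter_of_ne]
      intro j _ hj
      intro h0
      exact hj (by rw [h0, mul_zero])
    have he' : e ∈ (Finset.univ.filter fun j => β j ≠ 0) := by simp [he]
    have h2 : ∑ j ∈ (Finset.univ.filter fun j => β j ≠ 0), M i j * β j
        = M i e * β e + ∑ j ∈ S, M i j * β j := by
      rw [hS, ← Finset.add_sum_erase _ _ he']
    have := hrow i
    rw [h1, h2] at this
    linarith
  have hmv : B.mulVec x = fun q => -(β e) * M (ρ q) e := by
    funext q
    have : B.mulVec x q = ∑ p : Fin k, M (ρ q) (g p) * β (g p) := by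
      simp [Matrix.mulVec, dotProduct, hB, hx]
    rw [this]
    have hre : ∑ p : Fin k, M (ρ q) (g p) * β (g p) = ∑ j ∈ S, M (ρ q) j * β j := by
      rw [← Finset.sum_attach S (fun j => M (ρ q) j * β j)]
      exact Fintype.sum_equiv g _ _ (fun p => rfl)
    rw [hre, hsumS]
  -- Cramer's rule
  have hcramer : B.det • x = Matrix.cramer B (fun q => -(β e) * M (ρ q) e) := by
    rw [← hmv, Matrix.cramer_eq_adjugate_mulVec, Matrix.mulVec_mulVec, Matrix.adjugate_mul,
      Matrix.smul_mulVec, Matrix.one_mulVec]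
  set p0 : Fin k := g.symm ⟨f, hfS⟩ with hp0
  have hxp0 : x p0 = β f := by
    simp [hx, hp0]
  have hmain : B.det * β f = Matrix.cramer B (fun q => -(β e) * M (ρ q) e) p0 := by
    rw [← hcramer]
    simp [hxp0]
  -- the cramer column determinant is a TU submatrix determinant times -β e
  have hcol : (fun q => -(β e) * M (ρ q) e) = (-(β e)) • (fun q => M (ρ q) e) := rfl
  have hsmul : Matrix.cramer B ((-(β e)) • (fun q => M (ρ q) e))
      = (-(β e)) • Matrix.cramer B (fun q => M (ρ q) e) := map_smul _ _ _
  set d : ℤ := Matrix.cramer B (fun q => M (ρ q) e) p0 with hd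
  have hdTU : d ∈ ({-1, 0, 1} : Set ℤ) := by
    have hupd : B.updateCol p0 (fun q => M (ρ q) e)
        = M.submatrix ρ (fun p => if p = p0 then e else (g p : Fin m)) := by
      ext i j
      by_cases hj : j = p0 <;> simp [Matrix.updateCol_apply, hj, hB]
    rw [hd, Matrix.cramer_apply, hupd]
    exact hTU k ρ _
  have hfinal : B.det * β f = -(β e) * d := by
    rw [hmain, hcol, hsmul]
    simp [hd]
  -- conclude
  have habs : |β f| = |β e| * |d| := by
    have h1 : |B.det * β f| = |-(β e) * d| := by rw [hfinal]
    rw [abs_mul, abs_mul, hBdet1, one_mul, abs_neg] at h1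
    exact h1
  have hd0 : d ≠ 0 := by
    intro h0
    rw [h0, abs_zero, mul_zero] at habs
    exact hf (abs_eq_zero.mp habs)
  have hd1 : |d| = 1 := by
    have h3 : d = -1 ∨ d = 0 ∨ d = 1 := by simpa using hdTU
    rcases h3 with h | h | h
    · rw [h]; norm_num
    · exact absurd h hd0
    · rw [h]; norm_num
  rw [habs, hd1, mul_one]
end

section
/- Let M be a totally unimodular matrix with column set E and let C be a circuit of its column matroid. Then there exist exactly two vectors α in ker(M) ∩ ℤ^E with all coordinates in {-1,0,+1} and support equal to C, and these two vectors are negatives of each other. -/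
set_option maxHeartbeats 1000000
set_option synthInstance.maxHeartbeats 200000

open Matrix

open Matrix

/-- If the columns of a matrix over a field are linearly independent, some choice of
rows yields a square submatrix with nonzero determinant. -/
lemma exists_rows_det_ne_zero {r k : ℕ} (N : Matrix (Fin r) (Fin k) ℚ)
    (h : LinearIndependent ℚ (fun j => Nᵀ j)) :
    ∃ f : Fin k → Fin r, (N.submatrix f id).det ≠ 0 := by
  classical
  have hrkT : Nᵀ.rank = k := by
    have := h.rank_matrix; simp only [Fintype.card_fin] at this; exact this
  have hrk : N.rank = k := by rw [← Matrix.rank_transpose]; exact hrkT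
  have hspan : Submodule.span ℚ (Set.range N) = ⊤ := by
    have h1 : N.rank = Module.finrank ℚ (Submodule.span ℚ (Set.range N)) :=
      N.rank_eq_finrank_span_row
    apply Submodule.eq_top_of_finrank_eq
    rw [← h1, hrk, Module.finrank_fintype_fun_eq_card, Fintype.card_fin]
  obtain ⟨t, hts, hsp, hli⟩ := exists_linearIndependent ℚ (Set.range N)
  rw [hspan] at hsp
  have htfin : t.Finite := (Set.finite_range N).subset hts
  haveI : Fintype t := htfin.fintype
  have hcard : Fintype.card t = k := by
    have := finrank_span_set_eq_card hli
    rw [hsp] at this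
    simp only [finrank_top, Module.finrank_fintype_fun_eq_card, Fintype.card_fin] at this
    rw [Set.toFinset_card] at this; omega
  let e : Fin k ≃ t := (Fintype.equivFinOfCardEq hcard).symm
  have hchoice : ∀ v : t, ∃ i : Fin r, N i = v := fun v => hts v.2
  choose c hc using hchoice
  refine ⟨fun i => c (e i), ?_⟩
  have hrows : LinearIndependent ℚ (fun i : Fin k => N (c (e i))) := by
    have : (fun i : Fin k => N (c (e i))) = (fun v : t => (v : Fin k → ℚ)) ∘ e := by
      funext i; simp [hc]
    rw [this]
    exact hli.comp e e.injective
  have : IsUnit (N.submatrix (fun i => c (e i)) id) := by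
    rw [← Matrix.linearIndependent_rows_iff_isUnit]
    simpa [Matrix.submatrix] using hrows
  exact ((Matrix.isUnit_iff_isUnit_det _).mp this).ne_zero
open Matrix

lemma sum_coe_of_support {n : ℕ} (C : Set (Fin n)) [Fintype C] (f : Fin n → ℚ)
    (h : ∀ e, f e ≠ 0 → e ∈ C) : ∑ j : C, f j = ∑ e, f e := by
  classical
  rw [Finset.sum_set_coe]
  exact Finset.sum_subset (Finset.subset_univ _)
    (fun x _ hx => by by_contra h0; exact hx (Set.mem_toFinset.mpr (h x h0)))

/-- From a nonzero kernel vector supported in `C` we get that `C` is dependent. -/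
lemma colDep_of_kernel {r n : ℕ} (M : Matrix (Fin r) (Fin n) ℤ) (C : Set (Fin n))
    (y : Fin n → ℚ) (hker : (M.map (Int.cast : ℤ → ℚ)).mulVec y = 0)
    (hsupp : ∀ e, y e ≠ 0 → e ∈ C) (hne : y ≠ 0) :
    ¬ LinearIndependent ℚ (fun j : C => fun i => (M i j : ℚ)) := by
  classical
  haveI : Fintype C := (Set.toFinite C).fintype
  intro hli
  rw [Fintype.linearIndependent_iff] at hli
  have hsum : ∑ j : C, y j • (fun i => (M i j : ℚ)) = 0 := by
    funext i
    have h1 : ∑ j : C, y j.1 * (M i j.1 : ℚ) = ∑ e, y e * (M i e : ℚ) := by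
      refine sum_coe_of_support C (fun e => y e * (M i e : ℚ)) (fun e he => hsupp e ?_)
      intro h0
      simp only [h0, zero_mul, ne_eq, not_true_eq_false] at he
    have h2 := congr_fun hker i
    simp only [Matrix.mulVec, dotProduct, Matrix.map_apply, Pi.zero_apply] at h2
    simp only [Finset.sum_apply, Pi.smul_apply, smul_eq_mul, Pi.zero_apply]
    rw [h1, ← h2]
    exact Finset.sum_congr rfl (fun e _ => mul_comm _ _)
  have := hli (fun j => y j) hsum
  apply hne
  funext e
  by_contra h0
  exact h0 (this ⟨e, hsupp e h0⟩)

/-- Conversely, a dependent set carries a nonzero kernel vector supported in it. -/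
lemma kernel_of_colDep {r n : ℕ} (M : Matrix (Fin r) (Fin n) ℤ) (C : Set (Fin n))
    (h : ¬ LinearIndependent ℚ (fun j : C => fun i => (M i j : ℚ))) :
    ∃ y : Fin n → ℚ, y ≠ 0 ∧ (∀ e, y e ≠ 0 → e ∈ C) ∧
      (M.map (Int.cast : ℤ → ℚ)).mulVec y = 0 := by
  classical
  haveI : Fintype C := (Set.toFinite C).fintype
  rw [Fintype.not_linearIndependent_iff] at h
  obtain ⟨g, hg, j0, hj0⟩ := h
  set y : Fin n → ℚ := fun e => if h : e ∈ C then g ⟨e, h⟩ else 0 with hy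
  refine ⟨y, ?_, ?_, ?_⟩
  · intro h0
    apply hj0
    have := congr_fun h0 j0
    simpa [hy, j0.2] using this
  · intro e he
    by_contra h0
    simp [hy, h0] at he
  · funext i
    have h2 := congr_fun hg i
    simp only [Finset.sum_apply, Pi.smul_apply, smul_eq_mul, Pi.zero_apply] at h2
    have h1 : ∑ j : C, y j.1 * (M i j.1 : ℚ) = ∑ e, y e * (M i e : ℚ) := by
      refine sum_coe_of_support C (fun e => y e * (M i e : ℚ)) (fun e he => ?_)
      by_contra h0
      simp [hy, h0] at he
    simp only [Matrix.mulVec, dotProduct, Matrix.map_apply, Pi.zero_apply]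
    calc ∑ e, (M i e : ℚ) * y e = ∑ e, y e * (M i e : ℚ) :=
          Finset.sum_congr rfl (fun e _ => mul_comm _ _)
      _ = ∑ j : C, y j.1 * (M i j.1 : ℚ) := h1.symm
      _ = ∑ j : C, g j * (M i j.1 : ℚ) :=
          Finset.sum_congr rfl (fun j _ => by simp [hy, j.2])
      _ = 0 := h2


/-- For a TU matrix `M` and a circuit `C` of its column matroid, there are exactly two
integer vectors in `ker M` with entries in `{-1,0,1}` and support equal to `C`, and
they are negatives of each other. -/
theorem stmt4 {r m : ℕ} (M : Matrix (Fin r) (Fin m) ℤ) (hTU : IsTU M)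
    (C : Set (Fin m)) (hC : IsCircuit M C) :
    ∃ α : Fin m → ℤ,
      (M.mulVec α = 0 ∧ (∀ e, α e = -1 ∨ α e = 0 ∨ α e = 1) ∧ {e | α e ≠ 0} = C) ∧
      (M.mulVec (-α) = 0 ∧ (∀ e, (-α) e = -1 ∨ (-α) e = 0 ∨ (-α) e = 1) ∧
        {e | (-α) e ≠ 0} = C) ∧
      α ≠ -α ∧
      ∀ β : Fin m → ℤ,
        (M.mulVec β = 0 ∧ (∀ e, β e = -1 ∨ β e = 0 ∨ β e = 1) ∧ {e | β e ≠ 0} = C) →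
        β = α ∨ β = -α := by
  classical
  set Mq : Matrix (Fin r) (Fin m) ℚ := M.map (Int.cast : ℤ → ℚ) with hMq
  obtain ⟨y0, hy0ne, hy0supp, hy0ker⟩ := kernel_of_colDep M C hC.1
  -- a kernel vector supported in C vanishing somewhere on C is zero
  have hzero : ∀ (z : Fin m → ℚ), Mq.mulVec z = 0 → (∀ e, z e ≠ 0 → e ∈ C) →
      ∀ c ∈ C, z c = 0 → z = 0 := by
    intro z hzker hzsupp c hcC hzc
    by_contra hzne
    refine hC.2 (C \ {c}) (Set.sdiff_singleton_ssubset.mpr hcC)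
      (colDep_of_kernel M (C \ {c}) z hzker ?_ hzne)
    intro e he
    refine ⟨hzsupp e he, ?_⟩
    intro hec
    rw [Set.mem_singleton_iff] at hec
    exact he (hec ▸ hzc)
  have hy0full : ∀ c ∈ C, y0 c ≠ 0 := by
    intro c hc h0
    exact hy0ne (hzero y0 hy0ker hy0supp c hc h0)
  obtain ⟨e0, he0⟩ : ∃ e, y0 e ≠ 0 := by
    by_contra h; push_neg at h; exact hy0ne (funext fun e => h e)
  have he0C : e0 ∈ C := hy0supp e0 he0
  set y : Fin m → ℚ := (y0 e0)⁻¹ • y0 with hy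
  have hyker : Mq.mulVec y = 0 := by rw [hy, Matrix.mulVec_smul, hy0ker, smul_zero]
  have hysupp : ∀ e, y e ≠ 0 → e ∈ C := by
    intro e he
    apply hy0supp
    intro h0
    apply he
    simp [hy, h0]
  have hyfull : ∀ c ∈ C, y c ≠ 0 := by
    intro c hc
    simp only [hy, Pi.smul_apply, smul_eq_mul]
    exact mul_ne_zero (inv_ne_zero he0) (hy0full c hc)
  have hye0 : y e0 = 1 := by
    simp only [hy, Pi.smul_apply, smul_eq_mul]
    exact inv_mul_cancel₀ he0
  set C' : Set (Fin m) := C \ {e0} with hC'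
  haveI : Fintype C' := (Set.toFinite C').fintype
  have hli : LinearIndependent ℚ (fun j : C' => fun i => (M i (j : Fin m) : ℚ)) := by
    by_contra hdep
    exact hC.2 C' (Set.sdiff_singleton_ssubset.mpr he0C) hdep
  set k := Fintype.card C' with hk
  set eqv : Fin k ≃ C' := (Fintype.equivFin C').symm with heqv
  set ge : Fin k → Fin m := fun i => (eqv i : Fin m) with hge
  have hgeinj : Function.Injective ge := fun a b hab => eqv.injective (Subtype.ext hab)
  have hgeC : ∀ i, ge i ∈ C := fun i => (eqv i).2.1
  have hgene0 : ∀ i, ge i ≠ e0 := fun i => (eqv i).2.2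
  have hgerange : ∀ e (h : e ∈ C'), ge (eqv.symm ⟨e, h⟩) = e := by
    intro e h
    simp only [hge, Equiv.apply_symm_apply]
  set N : Matrix (Fin r) (Fin k) ℚ := fun i j => (M i (ge j) : ℚ) with hN
  have hNcols : LinearIndependent ℚ (fun j => Nᵀ j) := by
    have h1 : (fun j : Fin k => Nᵀ j) = (fun j : C' => fun i => (M i (j : Fin m) : ℚ)) ∘ eqv := rfl
    rw [h1]; exact hli.comp eqv eqv.injective
  obtain ⟨f, hfdet⟩ := exists_rows_det_ne_zero N hNcols
  set B : Matrix (Fin k) (Fin k) ℤ := M.submatrix f ge with hB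
  have hBcast : (B.map (Int.cast : ℤ → ℚ)) = N.submatrix f id := by
    ext i j; simp [hB, hN]; rfl
  have hBdet0 : B.det ≠ 0 := by
    intro h
    apply hfdet
    rw [← hBcast]
    have h2 : ((B.det : ℤ) : ℚ) = (B.map (Int.cast : ℤ → ℚ)).det := by
      have h3 := RingHom.map_det (Int.castRingHom ℚ) B
      rw [RingHom.mapMatrix_apply] at h3
      exact h3
    rw [← h2, h]
    simp
  have hBdet : B.det = 1 ∨ B.det = -1 := by
    have h1 := hTU k f ge
    simp only [Set.mem_insert_iff, Set.mem_singleton_iff] at h1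
    rcases h1 with h | h | h
    · right; exact h
    · exact absurd h hBdet0
    · left; exact h
  set b : Fin k → ℤ := fun t => -(M (f t) e0) with hb
  set x : Fin k → ℤ := B.det • cramer B b with hx
  have hdd : B.det * B.det = 1 := by rcases hBdet with h | h <;> rw [h] <;> norm_num
  have hBx : B.mulVec x = b := by
    rw [hx, Matrix.mulVec_smul, Matrix.mulVec_cramer B b, smul_smul, hdd, one_smul]
  have hxmem : ∀ i, x i = -1 ∨ x i = 0 ∨ x i = 1 := by
    intro i
    have hupd : B.updateCol i (fun t => M (f t) e0)
        = M.submatrix f (Function.update ge i e0) := by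
      ext a c
      by_cases h : c = i <;>
        simp [Matrix.updateCol_apply, Function.update_apply, h, hB]
    have hcr : cramer B b i = -(M.submatrix f (Function.update ge i e0)).det := by
      rw [Matrix.cramer_apply, ← hupd]
      have h2 : b = (-1 : ℤ) • (fun t => M (f t) e0) := by funext t; simp [hb]
      rw [h2, Matrix.det_updateCol_smul]
      ring
    have hTUd := hTU k f (Function.update ge i e0)
    simp only [Set.mem_insert_iff, Set.mem_singleton_iff] at hTUd
    have hxi : x i = B.det * cramer B b i := rfl
    rcases hBdet with h | h <;> rcases hTUd with h2 | h2 | h2 <;>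
      rw [hxi, hcr, h, h2] <;> norm_num
  -- the square system
  have hNfdet : IsUnit (N.submatrix f id) :=
    (Matrix.isUnit_iff_isUnit_det _).mpr (isUnit_iff_ne_zero.mpr hfdet)
  haveI : Invertible (N.submatrix f id) := hNfdet.invertible
  have hinj : Function.Injective (N.submatrix f id).mulVec :=
    Matrix.mulVec_injective_of_invertible _
  have hx1 : (N.submatrix f id).mulVec (fun i => (x i : ℚ))
      = fun j => -(M (f j) e0 : ℚ) := by
    funext j
    have h1 := congr_arg (Int.cast : ℤ → ℚ) (congr_fun hBx j)
    simp only [Matrix.mulVec, dotProduct] at h1 ⊢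
    push_cast at h1
    simp only [Matrix.submatrix_apply, id_eq, hN]
    change ∑ i, (M (f j) (ge i) : ℚ) * (x i : ℚ) = _
    convert h1 using 2 <;> simp [hB, hb]
  have hy1 : (N.submatrix f id).mulVec (fun i => y (ge i))
      = fun j => -(M (f j) e0 : ℚ) := by
    funext j
    have h0 := congr_fun hyker (f j)
    simp only [Matrix.mulVec, dotProduct, Matrix.map_apply, Pi.zero_apply, hMq] at h0
    set F : Fin m → ℚ := fun e => (M (f j) e : ℚ) * y e with hF
    have hsplit : ∑ e, F e = F e0 + ∑ e ∈ Finset.univ.erase e0, F e :=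
      (Finset.add_sum_erase _ F (Finset.mem_univ e0)).symm
    have himg : ∑ e ∈ Finset.univ.erase e0, F e = ∑ i, F (ge i) := by
      rw [← Finset.sum_image (g := ge) (f := F) (fun a _ c _ h => hgeinj h)]
      symm
      apply Finset.sum_subset
      · intro a ha
        obtain ⟨i, _, rfl⟩ := Finset.mem_image.mp ha
        exact Finset.mem_erase.mpr ⟨hgene0 i, Finset.mem_univ _⟩
      · intro a ha hna
        have hane0 : a ≠ e0 := (Finset.mem_erase.mp ha).1
        have haC' : a ∉ C' := by
          intro hmem
          exact hna (Finset.mem_image.mpr ⟨eqv.symm ⟨a, hmem⟩, Finset.mem_univ _,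
            hgerange a hmem⟩)
        have hya : y a = 0 := by
          by_contra h
          exact haC' ⟨hysupp a h, hane0⟩
        simp [hF, hya]
    have h2 : F e0 + ∑ i, F (ge i) = 0 := by
      rw [← himg, ← hsplit]
      exact h0
    simp only [Matrix.mulVec, dotProduct, Matrix.submatrix_apply, id_eq, hN]
    have h3 : ∑ i, (M (f j) (ge i) : ℚ) * y (ge i) = ∑ i, F (ge i) :=
      Finset.sum_congr rfl (fun i _ => rfl)
    change ∑ i, (M (f j) (ge i) : ℚ) * y (ge i) = _
    rw [h3]
    have h4 : F e0 = (M (f j) e0 : ℚ) := by simp [hF, hye0]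
    linarith [h2, h4.symm ▸ h2]
  have hxy : (fun i => (x i : ℚ)) = fun i => y (ge i) := hinj (hx1.trans hy1.symm)
  -- define α
  set α : Fin m → ℤ := fun e =>
    if e = e0 then 1 else if h : e ∈ C' then x (eqv.symm ⟨e, h⟩) else 0 with hα
  have hαcast : ∀ e, (α e : ℚ) = y e := by
    intro e
    by_cases h1 : e = e0
    · simp [hα, h1, hye0]
    · by_cases h2 : e ∈ C'
      · have h3 := congr_fun hxy (eqv.symm ⟨e, h2⟩)
        rw [hgerange e h2] at h3
        simp only [hα, if_neg h1, dif_pos h2]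
        exact h3
      · have heC : e ∉ C := fun h => h2 ⟨h, h1⟩
        have hy0 : y e = 0 := by
          by_contra h
          exact heC (hysupp e h)
        simp [hα, h1, h2, hy0]
  have hαe0 : α e0 = 1 := by simp [hα]
  have hαker : M.mulVec α = 0 := by
    funext i
    have h1 : ((M.mulVec α i : ℤ) : ℚ) = Mq.mulVec y i := by
      simp only [Matrix.mulVec, dotProduct, Matrix.map_apply, hMq]
      push_cast
      exact Finset.sum_congr rfl (fun e _ => by rw [hαcast e])
    rw [hyker] at h1
    simpa using h1
  have hαmem : ∀ e, α e = -1 ∨ α e = 0 ∨ α e = 1 := by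
    intro e
    by_cases h1 : e = e0
    · right; right; simp [hα, h1]
    · by_cases h2 : e ∈ C'
      · simpa [hα, h1, h2] using hxmem (eqv.symm ⟨e, h2⟩)
      · right; left; simp [hα, h1, h2]
  have hαsupp : {e | α e ≠ 0} = C := by
    ext e
    simp only [Set.mem_setOf_eq]
    constructor
    · intro h
      apply hysupp
      intro h0
      rw [← hαcast e] at h0
      exact h (by exact_mod_cast h0)
    · intro h h0
      apply hyfull e h
      rw [← hαcast e, h0]
      simp
  refine ⟨α, ⟨hαker, hαmem, hαsupp⟩, ⟨?_, ?_, ?_⟩, ?_, ?_⟩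
  · rw [Matrix.mulVec_neg, hαker, neg_zero]
  · intro e
    rcases hαmem e with h | h | h <;> simp [h]
  · rw [show {e | (-α) e ≠ 0} = {e | α e ≠ 0} by ext e; simp]
    exact hαsupp
  · intro hcontra
    have h1 := congr_fun hcontra e0
    rw [hαe0, Pi.neg_apply, hαe0] at h1
    omega
  · rintro β ⟨hβker, hβmem, hβsupp⟩
    have hβq : Mq.mulVec (fun e => (β e : ℚ)) = 0 := by
      funext i
      have h1 := congr_fun hβker i
      simp only [Matrix.mulVec, dotProduct, Matrix.map_apply, Pi.zero_apply, hMq] at h1 ⊢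
      exact_mod_cast h1
    set z : Fin m → ℚ := (β e0 : ℚ) • y - (fun e => (β e : ℚ)) with hz
    have hzker : Mq.mulVec z = 0 := by
      rw [hz, Matrix.mulVec_sub, Matrix.mulVec_smul, hyker, hβq, smul_zero, sub_zero]
    have hzsupp : ∀ e, z e ≠ 0 → e ∈ C := by
      intro e he
      by_contra h
      apply he
      have h1 : y e = 0 := by
        by_contra h2; exact h (hysupp e h2)
      have h2 : β e = 0 := by
        by_contra h2
        exact h (hβsupp ▸ h2 : e ∈ C)
      simp [hz, h1, h2]
    have hze0 : z e0 = 0 := by simp [hz, hye0]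
    have hz0 : z = 0 := hzero z hzker hzsupp e0 he0C hze0
    have hβα : ∀ e, β e = β e0 * α e := by
      intro e
      have h1 := congr_fun hz0 e
      simp only [hz, Pi.sub_apply, Pi.smul_apply, smul_eq_mul, Pi.zero_apply] at h1
      have h2 : (β e : ℚ) = (β e0 : ℚ) * y e := by linarith
      rw [← hαcast e] at h2
      exact_mod_cast h2
    have hβe0 : β e0 ≠ 0 := by
      have : e0 ∈ {e | β e ≠ 0} := hβsupp ▸ he0C
      exact this
    rcases hβmem e0 with h | h | h
    · right
      funext e
      rw [hβα e, h]
      simp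
    · exact absurd h hβe0
    · left
      funext e
      rw [hβα e, h, one_mul]
end

section
/- Let M be a totally unimodular matrix representing a regular matroid, with Λ = ker(M) ∩ ℤ^E. Every β ∈ Λ admits a consistent decomposition: a finite multiset 𝒜 of simple flows such that β = Σ_{α∈𝒜} α, supp(α) ⊆ supp(β) for all α ∈ 𝒜, and α(e)β(e) ≥ 0 for all α ∈ 𝒜 and e ∈ E. -/
section helpers
variable {r m : ℕ}

/-- TU for arbitrary finite index types. -/
lemma isTU_general {M : Matrix (Fin r) (Fin m) ℤ} (hTU : IsTU M) {ι : Type*} [Fintype ι]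
    [DecidableEq ι] (f : ι → Fin r) (g : ι → Fin m) :
    (M.submatrix f g).det ∈ ({-1, 0, 1} : Set ℤ) := by
  obtain e := Fintype.equivFin ι
  have h := hTU (Fintype.card ι) (f ∘ e.symm) (g ∘ e.symm)
  rwa [← Matrix.submatrix_submatrix, Matrix.det_submatrix_equiv_self e.symm] at h

/-- A rational kernel vector supported in `C` witnesses column dependence. -/
lemma coldep_of_kernel (M : Matrix (Fin r) (Fin m) ℤ) (x : Fin m → ℚ)
    (hx : x ≠ 0) (hker : ∀ i, ∑ j, x j * (M i j : ℚ) = 0) (C : Set (Fin m))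
    (hsupp : ∀ j, x j ≠ 0 → j ∈ C) : ColDep M C := by
  classical
  intro hli
  rw [Fintype.linearIndependent_iff] at hli
  have hz : ∀ j : C, x j = 0 := by
    apply hli (fun j : C => x j)
    funext i
    have h1 : (∑ j : C, x (j : Fin m) • (fun i => (M i (j : Fin m) : ℚ))) i
        = ∑ j : C, x (j : Fin m) * (M i (j : Fin m) : ℚ) := by
      simp [Finset.sum_apply]
    have h2 : ∑ j : C, x (j : Fin m) * (M i (j : Fin m) : ℚ)
        = ∑ j ∈ C.toFinset, x j * (M i j : ℚ) := by
      rw [← Finset.sum_set_coe (s := C) (f := fun j => x j * (M i j : ℚ))]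
    have h3 : ∑ j ∈ C.toFinset, x j * (M i j : ℚ) = ∑ j, x j * (M i j : ℚ) := by
      apply Finset.sum_subset (Finset.subset_univ _)
      intro j _ hj
      have : x j = 0 := by
        by_contra hxj
        exact hj (Set.mem_toFinset.mpr (hsupp j hxj))
      simp [this]
    simp only [Pi.zero_apply]
    rw [h1, h2, h3, hker i]
  obtain ⟨j, hj⟩ := Function.ne_iff.mp hx
  exact hj (hz ⟨j, hsupp j hj⟩)

/-- Column dependence gives a rational kernel vector supported in `C`. -/
lemma kernel_of_coldep (M : Matrix (Fin r) (Fin m) ℤ) (C : Set (Fin m)) (h : ColDep M C) :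
    ∃ x : Fin m → ℚ, x ≠ 0 ∧ (∀ j, x j ≠ 0 → j ∈ C) ∧ ∀ i, ∑ j, x j * (M i j : ℚ) = 0 := by
  classical
  rw [ColDep, Fintype.not_linearIndependent_iff] at h
  obtain ⟨g, hg, j0, hj0⟩ := h
  refine ⟨fun j => if h : j ∈ C then g ⟨j, h⟩ else 0, ?_, ?_, ?_⟩
  · intro hzero
    apply hj0
    have := congrFun hzero (j0 : Fin m)
    simpa [j0.2] using this
  · intro j hj
    by_contra hjc
    simp [hjc] at hj
  · intro i
    have h1 : ∑ j, (if h : j ∈ C then g ⟨j, h⟩ else 0) * (M i j : ℚ)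
        = ∑ j ∈ C.toFinset, (if h : j ∈ C then g ⟨j, h⟩ else 0) * (M i j : ℚ) := by
      symm
      apply Finset.sum_subset (Finset.subset_univ _)
      intro j _ hj
      have hjc : j ∉ C := fun hc => hj (Set.mem_toFinset.mpr hc)
      simp [hjc]
    have h2 : ∑ j ∈ C.toFinset, (if h : j ∈ C then g ⟨j, h⟩ else 0) * (M i j : ℚ)
        = ∑ j : C, g j * (M i (j : Fin m) : ℚ) := by
      rw [← Finset.sum_set_coe (s := C)
        (f := fun j => (if h : j ∈ C then g ⟨j, h⟩ else 0) * (M i j : ℚ))]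
      apply Finset.sum_congr rfl
      intro j _
      simp [j.2]
    have h3 := congrFun hg i
    simp only [Finset.sum_apply, Pi.smul_apply, smul_eq_mul, Pi.zero_apply] at h3
    rw [h1, h2, h3]

end helpers

section helpers2
variable {r : ℕ}

/-- From a dependent set one can extract a circuit. -/
lemma exists_circuit_subset' {m : ℕ} (M : Matrix (Fin r) (Fin m) ℤ) :
    ∀ (n : ℕ) (S : Set (Fin m)), S.ncard ≤ n → ColDep M S →
      ∃ C, C ⊆ S ∧ (ColDep M C ∧ ∀ C' ⊂ C, ¬ ColDep M C') := by
  intro n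
  induction n with
  | zero =>
    intro S hc hd
    have hS : S = ∅ := (Set.ncard_eq_zero (Set.toFinite S)).mp (Nat.le_zero.mp hc)
    subst hS
    exact absurd (linearIndependent_empty_type) hd
  | succ n ih =>
    intro S hc hd
    by_cases h : ∀ C' ⊂ S, ¬ ColDep M C'
    · exact ⟨S, subset_rfl, hd, h⟩
    · push_neg at h
      obtain ⟨C', hsub, hdep⟩ := h
      obtain ⟨C, hCs, hC⟩ := ih C'
        (by have := Set.ncard_lt_ncard hsub (Set.toFinite S); omega) hdep
      exact ⟨C, hCs.trans hsub.subset, hC⟩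

/-- Linearly independent columns admit a row selection with nonzero determinant. -/
lemma rowpick {ι : Type*} [Fintype ι] [DecidableEq ι] (A : Matrix (Fin r) ι ℚ)
    (h : LinearIndependent ℚ (fun j : ι => fun i => A i j)) :
    ∃ f : ι → Fin r, (A.submatrix f id).det ≠ 0 := by
  classical
  have hrankT : A.transpose.rank = Fintype.card ι := by
    have h' : LinearIndependent ℚ (fun j : ι => A.transpose j) := h
    exact h'.rank_matrix
  have hrank : A.rank = Fintype.card ι := by rw [← Matrix.rank_transpose]; exact hrankT
  have hspan : Module.finrank ℚ (Submodule.span ℚ (Set.range A)) = Fintype.card ι := by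
    exact (Matrix.rank_eq_finrank_span_row A).symm.trans hrank
  obtain ⟨b, hbsub, hbspan, hbind⟩ := exists_linearIndependent ℚ (Set.range A)
  letI : Fintype b := ((Set.finite_range A).subset hbsub).fintype
  have hcardb : Fintype.card b = Fintype.card ι := by
    have h1 : Module.finrank ℚ (Submodule.span ℚ (Set.range ((↑) : b → (ι → ℚ))))
        = Fintype.card b := finrank_span_eq_card hbind
    rw [Subtype.range_coe, hbspan, hspan] at h1
    exact h1.symm
  obtain e := (Fintype.equivOfCardEq hcardb).symm
  have hpick : ∀ x : b, ∃ i : Fin r, A i = (x : ι → ℚ) := fun x => hbsub x.2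
  choose pick hpick' using hpick
  refine ⟨fun j => pick (e j), ?_⟩
  have hrows : LinearIndependent ℚ (fun j : ι => (A.submatrix (fun j => pick (e j)) id) j) := by
    have heq : (fun j : ι => (A.submatrix (fun j => pick (e j)) id) j)
        = (fun x : b => (x : ι → ℚ)) ∘ e := by
      funext j
      exact (hpick' (e j))
    rw [heq]
    exact hbind.comp e e.injective
  have h1 := Matrix.linearIndependent_rows_iff_isUnit.mp hrows
  have h2 := (Matrix.isUnit_iff_isUnit_det _).mp h1
  exact h2.ne_zero
end helpers2

section circuitflow
variable {r m : ℕ}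

lemma circuit_flow (M : Matrix (Fin r) (Fin m) ℤ) (hTU : IsTU M)
    (C : Set (Fin m)) (hdep : ColDep M C) (hmin : ∀ C' ⊂ C, ¬ ColDep M C') :
    ∃ α : Fin m → ℤ, (∀ e, α e = -1 ∨ α e = 0 ∨ α e = 1) ∧ {e | α e ≠ 0} = C ∧
      (∀ i, ∑ j, (M i j : ℚ) * (α j : ℚ) = 0) ∧ α ≠ 0 := by
  classical
  obtain ⟨x, hx0, hxsupp, hxker⟩ := kernel_of_coldep M C hdep
  have hsuppC : {j | x j ≠ 0} = C := by
    have hsub : {j | x j ≠ 0} ⊆ C := fun j hj => hxsupp j hj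
    by_contra hne
    exact hmin _ (ssubset_of_subset_of_ne hsub hne)
      (coldep_of_kernel M x hx0 hxker _ (fun j hj => hj))
  obtain ⟨e0, he0x⟩ := Function.ne_iff.mp hx0
  have he0 : x e0 ≠ 0 := by simpa using he0x
  have he0C : e0 ∈ C := hxsupp e0 he0
  set y : Fin m → ℚ := fun j => x j / x e0 with hy
  have hye0 : y e0 = 1 := div_self he0
  have hysupp : ∀ j, y j ≠ 0 ↔ x j ≠ 0 := by
    intro j; simp [hy, div_eq_zero_iff, he0]
  have hyC : ∀ j, y j ≠ 0 ↔ j ∈ C := by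
    intro j; rw [hysupp j, ← hsuppC]; rfl
  have hyker : ∀ i, ∑ j, y j * (M i j : ℚ) = 0 := by
    intro i
    have : ∑ j, y j * (M i j : ℚ) = (∑ j, x j * (M i j : ℚ)) / x e0 := by
      rw [Finset.sum_div]
      exact Finset.sum_congr rfl fun j _ => by rw [hy]; ring
    rw [this, hxker i, zero_div]
  -- finset versions of C and C \ {e0}
  set sF : Finset (Fin m) := (Set.toFinite C).toFinset with hsF
  have hmemsF : ∀ j, j ∈ sF ↔ j ∈ C := fun j => Set.Finite.mem_toFinset _
  set t : Finset (Fin m) := sF.erase e0 with ht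
  set D : Set (Fin m) := C \ {e0} with hD
  have hmemt : ∀ j, j ∈ t ↔ j ∈ D := by
    intro j
    simp only [ht, Finset.mem_erase, hmemsF, hD, Set.mem_diff, Set.mem_singleton_iff, and_comm]
  have hDss : D ⊂ C := Set.sdiff_singleton_ssubset.mpr he0C
  have hDind : LinearIndependent ℚ (fun j : D => fun i => (M i (j : Fin m) : ℚ)) :=
    not_not.mp (hmin D hDss)
  set A : Matrix (Fin r) {j // j ∈ t} ℚ := Matrix.of (fun i j => (M i (j : Fin m) : ℚ)) with hA
  have hAind : LinearIndependent ℚ (fun j : {j // j ∈ t} => fun i => A i j) := by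
    let e := Equiv.subtypeEquivRight hmemt
    have h2 := hDind.comp e e.injective
    have heq : (fun j : {j // j ∈ t} => fun i => A i j)
        = (fun j : D => fun i => (M i (j : Fin m) : ℚ)) ∘ e := by
      funext j i; rfl
    rw [heq]
    exact h2
  obtain ⟨f, hdet⟩ := rowpick A hAind
  set B : Matrix {j // j ∈ t} {j // j ∈ t} ℚ := A.submatrix f id with hB
  set y' : {j // j ∈ t} → ℚ := fun j => y j with hy'
  set bb : {j // j ∈ t} → ℚ := fun p => -(M (f p) e0 : ℚ) with hbb
  have hBy : B.mulVec y' = bb := by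
    funext p
    have hk := hyker (f p)
    have h1 : ∑ j, y j * (M (f p) j : ℚ) = ∑ j ∈ sF, y j * (M (f p) j : ℚ) := by
      symm
      apply Finset.sum_subset (Finset.subset_univ _)
      intro j _ hj
      have : y j = 0 := by
        by_contra hyj
        exact hj ((hmemsF j).mpr ((hyC j).mp hyj))
      simp [this]
    have he0sF : e0 ∈ sF := (hmemsF e0).mpr he0C
    have h2 : y e0 * (M (f p) e0 : ℚ) + ∑ j ∈ t, y j * (M (f p) j : ℚ)
        = ∑ j ∈ sF, y j * (M (f p) j : ℚ) :=
      Finset.add_sum_erase sF (fun j => y j * (M (f p) j : ℚ)) he0sF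
    have h3 : ∑ j ∈ t, y j * (M (f p) j : ℚ)
        = ∑ j : {j // j ∈ t}, y (j : Fin m) * (M (f p) (j : Fin m) : ℚ) :=
      (Finset.sum_coe_sort t _).symm
    have h4 : B.mulVec y' p = ∑ j : {j // j ∈ t}, y (j : Fin m) * (M (f p) (j : Fin m) : ℚ) := by
      simp only [hB, hA, Matrix.mulVec, dotProduct, Matrix.submatrix_apply, id,
        Matrix.of_apply, hy']
      exact Finset.sum_congr rfl fun j _ => mul_comm _ _
    rw [h4, ← h3]
    have : y e0 * (M (f p) e0 : ℚ) + ∑ j ∈ t, y j * (M (f p) j : ℚ) = 0 := by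
      rw [h2, ← h1, hk]
    rw [hye0] at this
    simp only [hbb]
    linarith
  have hcramer : B.det • y' = Matrix.cramer B bb := by
    calc B.det • y' = ((B.det • (1 : Matrix _ _ ℚ))).mulVec y' := by
          rw [Matrix.smul_mulVec, Matrix.one_mulVec]
      _ = (B.adjugate * B).mulVec y' := by rw [Matrix.adjugate_mul]
      _ = B.adjugate.mulVec bb := by rw [← Matrix.mulVec_mulVec, hBy]
      _ = Matrix.cramer B bb := (Matrix.cramer_eq_adjugate_mulVec B bb).symm
  -- B is the cast of an integer submatrix
  have hBdet_int : ∃ d : ℤ, (d = -1 ∨ d = 1) ∧ B.det = (d : ℚ) := by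
    have hcast : B = (M.submatrix f (fun j : {j // j ∈ t} => (j : Fin m))).map
        (Int.castRingHom ℚ) := by
      ext p q; simp [hB, hA]
    have hd := isTU_general hTU f (fun j : {j // j ∈ t} => (j : Fin m))
    have : B.det = ((M.submatrix f (fun j : {j // j ∈ t} => (j : Fin m))).det : ℚ) := by
      rw [hcast, ← RingHom.mapMatrix_apply, ← RingHom.map_det]; rfl
    rcases hd with h | h | h
    · exact ⟨-1, Or.inl rfl, by rw [this]; exact_mod_cast h⟩
    · exact absurd (by rw [this, h]; norm_num : B.det = 0) hdet
    · exact ⟨1, Or.inr rfl, by rw [this]; exact_mod_cast h⟩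
  have hentry : ∀ j, y j = -1 ∨ y j = 0 ∨ y j = 1 := by
    intro j
    by_cases hjC : j ∈ C
    · by_cases hje0 : j = e0
      · right; right; rw [hje0]; exact hye0
      · have hjt : j ∈ t := (hmemt j).mpr ⟨hjC, hje0⟩
        set p : {j // j ∈ t} := ⟨j, hjt⟩ with hp
        have heq := congrFun hcramer p
        simp only [Pi.smul_apply, smul_eq_mul, hy'] at heq
        -- numerator is (up to sign) the det of an integer submatrix
        have hnum : ∃ c : ℤ, (c = -1 ∨ c = 0 ∨ c = 1) ∧
            Matrix.cramer B bb p = -(c : ℚ) := by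
          set g' : {j // j ∈ t} → Fin m :=
            Function.update (fun q : {j // j ∈ t} => (q : Fin m)) p e0 with hg'
          have hupd : B.updateCol p (fun q => ((M (f q) e0 : ℤ) : ℚ))
              = (M.submatrix f g').map (Int.castRingHom ℚ) := by
            ext q q'
            by_cases hq' : q' = p
            · subst hq'; simp [Matrix.updateCol_apply, hg', hB, hA]
            · simp [Matrix.updateCol_apply, hq', hg', Function.update_of_ne hq', hB, hA]
          have hbbsmul : bb = (-1 : ℚ) • (fun q => ((M (f q) e0 : ℤ) : ℚ)) := by
            funext q; simp [hbb]
          have hc := isTU_general hTU f g'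
          refine ⟨(M.submatrix f g').det, by simpa [Set.mem_insert_iff] using hc, ?_⟩
          rw [Matrix.cramer_apply, hbbsmul, Matrix.det_updateCol_smul, hupd,
            ← RingHom.mapMatrix_apply, ← RingHom.map_det]
          simp
        obtain ⟨d, hd, hdet_eq⟩ := hBdet_int
        obtain ⟨c, hc, hnum_eq⟩ := hnum
        rw [hdet_eq, hnum_eq] at heq
        have hd2 : (d : ℚ) = -1 ∨ (d : ℚ) = 1 := by
          rcases hd with rfl | rfl
          · left; norm_num
          · right; norm_num
        have hc2 : (c : ℚ) = -1 ∨ (c : ℚ) = 0 ∨ (c : ℚ) = 1 := by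
          rcases hc with rfl | rfl | rfl
          · left; norm_num
          · right; left; norm_num
          · right; right; norm_num
        rcases hd2 with h1 | h1 <;> rcases hc2 with h2 | h2 | h2 <;> rw [h1, h2] at heq <;>
          first
            | (left; linarith)
            | (right; left; linarith)
            | (right; right; linarith)
    · right; left; exact not_not.mp (fun h => hjC ((hyC j).mp h))
  set α : Fin m → ℤ := fun j => if y j = 1 then 1 else if y j = -1 then -1 else 0 with hα
  have hcast : ∀ j, (α j : ℚ) = y j := by
    intro j
    rcases hentry j with h | h | h <;> norm_num [hα, h]
  have hαsupp : ∀ j, α j ≠ 0 ↔ y j ≠ 0 := by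
    intro j
    constructor
    · intro h hy0
      apply h
      simp [hα, hy0]
    · intro h h0
      apply h
      rw [← hcast j, h0]; norm_num
  refine ⟨α, ?_, ?_, ?_, ?_⟩
  · intro e
    rcases hentry e with h | h | h
    · left; have := hcast e; rw [h] at this; exact_mod_cast this
    · right; left; have := hcast e; rw [h] at this; exact_mod_cast this
    · right; right; have := hcast e; rw [h] at this; exact_mod_cast this
  · ext j
    simp only [Set.mem_setOf_eq]
    rw [hαsupp j, hyC j]
  · intro i
    have := hyker i
    rw [← this]
    exact Finset.sum_congr rfl fun j _ => by rw [hcast j, mul_comm]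
  · intro h
    have h0 := congrFun h e0
    simp only [Pi.zero_apply] at h0
    have hy0 : y e0 ≠ 0 := (hysupp e0).mpr he0
    exact hy0 (by rw [← hcast e0, h0]; norm_num)

end circuitflow

section conformal
variable {r m : ℕ}

/-- An integer kernel vector's support is column-dependent; extract a simple flow
supported inside it. -/
lemma exists_simple_flow_in_supp (M : Matrix (Fin r) (Fin m) ℤ) (hTU : IsTU M)
    (β : Fin m → ℤ) (hβ : β ≠ 0) (hker : M.mulVec β = 0) :
    ∃ α : Fin m → ℤ, IsSimpleFlow M α ∧ (∀ e, α e ≠ 0 → β e ≠ 0) := by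
  classical
  set x : Fin m → ℚ := fun j => (β j : ℚ) with hx
  have hx0 : x ≠ 0 := by
    intro h
    apply hβ
    funext j
    have := congrFun h j
    simpa [hx] using this
  have hxker : ∀ i, ∑ j, x j * (M i j : ℚ) = 0 := by
    intro i
    have h0 := congrFun hker i
    simp only [Matrix.mulVec, dotProduct, Pi.zero_apply] at h0
    have : ((∑ j, M i j * β j : ℤ) : ℚ) = 0 := by rw [h0]; norm_num
    push_cast at this
    rw [← this]
    exact Finset.sum_congr rfl fun j _ => mul_comm _ _
  have hdep : ColDep M {e | β e ≠ 0} := by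
    apply coldep_of_kernel M x hx0 hxker
    intro j hj
    simp only [hx, ne_eq, Int.cast_eq_zero] at hj
    exact hj
  obtain ⟨C, hCsub, hCdep, hCmin⟩ :=
    exists_circuit_subset' M ({e | β e ≠ 0} : Set (Fin m)).ncard _ le_rfl hdep
  obtain ⟨α, hent, hsupp, hkerQ, hα0⟩ := circuit_flow M hTU C hCdep hCmin
  have hkerZ : M.mulVec α = 0 := by
    funext i
    have h0 := hkerQ i
    have : ((M.mulVec α i : ℤ) : ℚ) = 0 := by
      simp only [Matrix.mulVec, dotProduct]
      push_cast
      exact h0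
    exact_mod_cast this
  refine ⟨α, ⟨hα0, hkerZ, hent, ?_⟩, ?_⟩
  · rw [hsupp]; exact ⟨hCdep, hCmin⟩
  · intro e he
    have : e ∈ C := by rw [← hsupp]; exact he
    exact hCsub this

/-- Conformal simple flow existence. -/
lemma exists_conformal_flow (M : Matrix (Fin r) (Fin m) ℤ) (hTU : IsTU M) :
    ∀ (n : ℕ) (β : Fin m → ℤ), ({e | β e ≠ 0} : Set (Fin m)).ncard ≤ n → β ≠ 0 →
      M.mulVec β = 0 →
      ∃ α : Fin m → ℤ, IsSimpleFlow M α ∧ (∀ e, α e ≠ 0 → β e ≠ 0) ∧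
        ∀ e, 0 ≤ α e * β e := by
  classical
  intro n
  induction n with
  | zero =>
    intro β hcard hβ hker
    exfalso
    apply hβ
    have hempty : ({e | β e ≠ 0} : Set (Fin m)) = ∅ :=
      (Set.ncard_eq_zero (Set.toFinite _)).mp (Nat.le_zero.mp hcard)
    funext e
    by_contra he
    exact absurd (hempty ▸ (he : e ∈ {e | β e ≠ 0})) (Set.notMem_empty e)
  | succ n ih =>
    intro β hcard hβ hker
    obtain ⟨α0, hsf, hsupp0⟩ := exists_simple_flow_in_supp M hTU β hβ hker
    obtain ⟨hα00, hker0, hent0, hcirc0⟩ := hsf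
    obtain ⟨e0, he0⟩ := Function.ne_iff.mp hα00
    have he0' : α0 e0 ≠ 0 := by simpa using he0
    -- orient α0 so that it agrees with β at e0
    set ε : ℤ := if 0 ≤ α0 e0 * β e0 then 1 else -1 with hε
    set α1 : Fin m → ℤ := fun e => ε * α0 e with hα1
    have hεv : ε = 1 ∨ ε = -1 := by
      by_cases hc : 0 ≤ α0 e0 * β e0 <;> simp [hε, hc]
    have hα1supp : ∀ e, α1 e ≠ 0 ↔ α0 e ≠ 0 := by
      intro e
      have h4 : α1 e = ε * α0 e := rfl
      rcases hεv with h1 | h1 <;> rw [h4, h1] <;> simp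
    have hsf1 : IsSimpleFlow M α1 := by
      refine ⟨?_, ?_, ?_, ?_⟩
      · intro h
        apply hα00
        funext e
        have h2 : ε * α0 e = 0 := congrFun h e
        simp only [Pi.zero_apply]
        rcases hεv with h1 | h1 <;> rw [h1] at h2 <;> omega
      · have h5 : α1 = ε • α0 := by funext e; simp [hα1]
        rw [h5, Matrix.mulVec_smul, hker0, smul_zero]
      · intro e
        have h3 := hent0 e
        have h4 : α1 e = ε * α0 e := rfl
        rw [h4]
        rcases hεv with h1 | h1 <;> rw [h1] <;> omega
      · have h6 : {e | α1 e ≠ 0} = {e | α0 e ≠ 0} := by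
          ext e; exact hα1supp e
        rw [h6]
        exact hcirc0
    have hα1suppβ : ∀ e, α1 e ≠ 0 → β e ≠ 0 := fun e he =>
      hsupp0 e ((hα1supp e).mp he)
    have hα1ent : ∀ e, α1 e = -1 ∨ α1 e = 0 ∨ α1 e = 1 := hsf1.2.2.1
    have he0conf : 0 < α1 e0 * β e0 := by
      have hβ0 : β e0 ≠ 0 := hsupp0 e0 he0'
      have h4 : α1 e0 = ε * α0 e0 := rfl
      by_cases hc : 0 ≤ α0 e0 * β e0
      · have hεe : ε = 1 := by simp [hε, hc]
        rw [h4, hεe, one_mul]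
        rcases hent0 e0 with h1 | h1 | h1 <;> rw [h1] at hc ⊢ <;> omega
      · have hεe : ε = -1 := by simp [hε, hc]
        rw [h4, hεe]
        push_neg at hc
        rcases hent0 e0 with h1 | h1 | h1 <;> rw [h1] at hc ⊢ <;> omega
    by_cases hconf : ∀ e, 0 ≤ α1 e * β e
    · exact ⟨α1, hsf1, hα1suppβ, hconf⟩
    push_neg at hconf
    obtain ⟨e1, he1⟩ := hconf
    -- the discordant set and the stepsize
    set T : Finset (Fin m) := Finset.univ.filter (fun e => α1 e * β e < 0) with hT
    have hTne : T.Nonempty := ⟨e1, Finset.mem_filter.mpr ⟨Finset.mem_univ _, he1⟩⟩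
    obtain ⟨estar, hestarT, hestar⟩ := T.exists_mem_eq_inf' hTne (fun e => (β e).natAbs)
    have hestar' : α1 estar * β estar < 0 := (Finset.mem_filter.mp hestarT).2
    set t : ℤ := ((β estar).natAbs : ℤ) with htdef
    have htle : ∀ e, α1 e * β e < 0 → t ≤ |β e| := by
      intro e he
      have heT : e ∈ T := Finset.mem_filter.mpr ⟨Finset.mem_univ _, he⟩
      have h7 := Finset.inf'_le (fun e => (β e).natAbs) heT
      rw [hestar] at h7
      rw [htdef, Int.abs_eq_natAbs]
      exact_mod_cast h7
    have hestarβ0 : β estar ≠ 0 := by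
      intro h; rw [h, mul_zero] at hestar'; omega
    have ht1 : 1 ≤ t := by
      rw [htdef]
      have h8 : (β estar).natAbs ≠ 0 := Int.natAbs_ne_zero.mpr hestarβ0
      omega
    set β' : Fin m → ℤ := fun e => β e + t * α1 e with hβ'
    have hβ'e : ∀ e, β' e = β e + t * α1 e := fun e => rfl
    have hkerβ' : M.mulVec β' = 0 := by
      have h9 : β' = β + t • α1 := by funext e; simp [hβ', Pi.add_apply]
      rw [h9, Matrix.mulVec_add, Matrix.mulVec_smul, hker, hsf1.2.1]
      simp
    -- sign preservation and support shrinking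
    have hsign : ∀ e, (0 < β e → 0 ≤ β' e) ∧ (β e < 0 → β' e ≤ 0) ∧ (β e = 0 → β' e = 0) := by
      intro e
      rcases hα1ent e with h1 | h1 | h1
      · have hne : β e ≠ 0 := hα1suppβ e (by rw [h1]; omega)
        by_cases hd : α1 e * β e < 0
        · have h10 := htle e hd
          rw [h1] at hd
          rw [hβ'e e, h1]
          refine ⟨fun h => ?_, fun h => by omega, fun h => absurd h hne⟩
          rw [abs_of_pos h] at h10; omega
        · push_neg at hd
          rw [h1] at hd
          rw [hβ'e e, h1]
          exact ⟨fun h => by omega, fun h => by omega, fun h => absurd h hne⟩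
      · rw [hβ'e e, h1]
        exact ⟨fun h => by omega, fun h => by omega, fun h => by omega⟩
      · have hne : β e ≠ 0 := hα1suppβ e (by rw [h1]; omega)
        by_cases hd : α1 e * β e < 0
        · have h10 := htle e hd
          rw [h1] at hd
          rw [hβ'e e, h1]
          refine ⟨fun h => by omega, fun h => ?_, fun h => absurd h hne⟩
          rw [abs_of_neg h] at h10; omega
        · push_neg at hd
          rw [h1] at hd
          rw [hβ'e e, h1]
          exact ⟨fun h => by omega, fun h => by omega, fun h => absurd h hne⟩
    have hsub : {e | β' e ≠ 0} ⊆ {e | β e ≠ 0} := by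
      intro e he
      simp only [Set.mem_setOf_eq] at he ⊢
      intro h
      exact he ((hsign e).2.2 h)
    have hestar0 : β' estar = 0 := by
      rcases hα1ent estar with h1 | h1 | h1
      · rw [h1] at hestar'
        have hbpos : 0 < β estar := by omega
        rw [hβ'e estar, h1, htdef]
        omega
      · rw [h1, zero_mul] at hestar'; omega
      · rw [h1] at hestar'
        have hbneg : β estar < 0 := by omega
        rw [hβ'e estar, h1, htdef]
        omega
    have hestarβ : β estar ≠ 0 := by
      intro h; rw [h, mul_zero] at hestar'; omega
    have hssub : {e | β' e ≠ 0} ⊂ {e | β e ≠ 0} := by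
      refine ⟨hsub, fun hsup => ?_⟩
      have : estar ∈ {e | β' e ≠ 0} := hsup hestarβ
      exact this hestar0
    have hβ'0 : β' ≠ 0 := by
      intro h
      have h2 : β' e0 = 0 := congrFun h e0
      rw [hβ'e e0] at h2
      rcases hα1ent e0 with h1 | h1 | h1
      · rw [h1] at he0conf h2; omega
      · rw [h1] at he0conf; omega
      · rw [h1] at he0conf h2; omega
    have hcard' : ({e | β' e ≠ 0} : Set (Fin m)).ncard ≤ n := by
      have := Set.ncard_lt_ncard hssub (Set.toFinite _)
      omega
    obtain ⟨α, hαsf, hαsupp, hαconf⟩ := ih β' hcard' hβ'0 hkerβ'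
    refine ⟨α, hαsf, ?_, ?_⟩
    · intro e he
      have h2 : β' e ≠ 0 := hαsupp e he
      intro h
      exact h2 ((hsign e).2.2 h)
    · intro e
      rcases hαsf.2.2.1 e with h1 | h1 | h1
      · have h2 : β' e ≠ 0 := hαsupp e (by rw [h1]; omega)
        have h3 := hαconf e
        rw [h1] at h3 ⊢
        obtain ⟨hs1, hs2, hs3⟩ := hsign e
        by_cases hb : 0 < β e
        · have := hs1 hb; omega
        · by_cases hb2 : β e < 0
          · omega
          · have : β e = 0 := by omega
            exact absurd (hs3 this) h2
      · rw [h1]; omega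
      · have h2 : β' e ≠ 0 := hαsupp e (by rw [h1]; omega)
        have h3 := hαconf e
        rw [h1] at h3 ⊢
        obtain ⟨hs1, hs2, hs3⟩ := hsign e
        by_cases hb : 0 < β e
        · omega
        · by_cases hb2 : β e < 0
          · have := hs2 hb2; omega
          · have : β e = 0 := by omega
            exact absurd (hs3 this) h2

end conformal

/-- Every integer flow of a TU matrix `M` admits a consistent decomposition into
simple flows. -/
theorem stmt7 {r m : ℕ} (M : Matrix (Fin r) (Fin m) ℤ) (hTU : IsTU M)
    (β : Fin m → ℤ) (hker : M.mulVec β = 0) :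
    ∃ 𝒜 : Multiset (Fin m → ℤ),
      (∀ α ∈ 𝒜, IsSimpleFlow M α ∧ {e | α e ≠ 0} ⊆ {e | β e ≠ 0} ∧
        ∀ e, 0 ≤ α e * β e) ∧
      𝒜.sum = β := by
  classical
  suffices h : ∀ (N : ℕ) (β : Fin m → ℤ), (∑ e, (β e).natAbs) ≤ N → M.mulVec β = 0 →
      ∃ 𝒜 : Multiset (Fin m → ℤ),
        (∀ α ∈ 𝒜, IsSimpleFlow M α ∧ {e | α e ≠ 0} ⊆ {e | β e ≠ 0} ∧
          ∀ e, 0 ≤ α e * β e) ∧ 𝒜.sum = β by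
    exact h _ β le_rfl hker
  intro N
  induction N with
  | zero =>
    intro β hN hker
    have hz : ∀ e, β e = 0 := by
      intro e
      have := Finset.sum_eq_zero_iff.mp (Nat.le_zero.mp hN) e (Finset.mem_univ e)
      omega
    refine ⟨0, by simp, ?_⟩
    simp only [Multiset.sum_zero]
    funext e
    exact (hz e).symm
  | succ N ih =>
    intro β hN hker
    by_cases hβ : β = 0
    · subst hβ
      exact ⟨0, by simp, by simp⟩
    obtain ⟨α, hαsf, hαsupp, hαconf⟩ := exists_conformal_flow M hTU _ β le_rfl hβ hker
    set β' : Fin m → ℤ := fun e => β e - α e with hβ'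
    have hβ'e : ∀ e, β' e = β e - α e := fun e => rfl
    have hker' : M.mulVec β' = 0 := by
      have h9 : β' = β - α := by funext e; simp [hβ']
      rw [h9, Matrix.mulVec_sub, hker, hαsf.2.1, sub_zero]
    have hfacts : ∀ e, (β' e).natAbs ≤ (β e).natAbs ∧ (β e = 0 → β' e = 0) ∧
        (0 < β e → 0 ≤ β' e) ∧ (β e < 0 → β' e ≤ 0) := by
      intro e
      rcases hαsf.2.2.1 e with h1 | h1 | h1
      · have hne : β e ≠ 0 := hαsupp e (by rw [h1]; omega)
        have hc := hαconf e
        rw [h1] at hc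
        rw [hβ'e e, h1]
        refine ⟨?_, ?_, ?_, ?_⟩ <;> omega
      · rw [hβ'e e, h1]
        refine ⟨?_, ?_, ?_, ?_⟩ <;> omega
      · have hne : β e ≠ 0 := hαsupp e (by rw [h1]; omega)
        have hc := hαconf e
        rw [h1] at hc
        rw [hβ'e e, h1]
        refine ⟨?_, ?_, ?_, ?_⟩ <;> omega
    obtain ⟨f0, hf0⟩ := Function.ne_iff.mp hαsf.1
    have hf0' : α f0 ≠ 0 := by simpa using hf0
    have hstrict : (β' f0).natAbs < (β f0).natAbs := by
      have hne : β f0 ≠ 0 := hαsupp f0 hf0'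
      have hc := hαconf f0
      rcases hαsf.2.2.1 f0 with h1 | h1 | h1
      · rw [h1] at hc
        rw [hβ'e f0, h1]
        omega
      · exact absurd h1 hf0'
      · rw [h1] at hc
        rw [hβ'e f0, h1]
        omega
    have hsumle : ∑ e, (β' e).natAbs ≤ N := by
      have hlt : ∑ e, (β' e).natAbs < ∑ e, (β e).natAbs :=
        Finset.sum_lt_sum (fun e _ => (hfacts e).1) ⟨f0, Finset.mem_univ f0, hstrict⟩
      omega
    obtain ⟨𝒜', h𝒜', hsum'⟩ := ih β' hsumle hker'
    refine ⟨α ::ₘ 𝒜', ?_, ?_⟩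
    · intro γ hγ
      rcases Multiset.mem_cons.mp hγ with rfl | hγ'
      · exact ⟨hαsf, fun e he => hαsupp e he, hαconf⟩
      · obtain ⟨hsf, hsupp, hconf⟩ := h𝒜' γ hγ'
        refine ⟨hsf, ?_, ?_⟩
        · intro e he
          have h2 : β' e ≠ 0 := hsupp he
          simp only [Set.mem_setOf_eq] at *
          intro h
          exact h2 ((hfacts e).2.1 h)
        · intro e
          rcases hsf.2.2.1 e with h1 | h1 | h1
          · have h2 : β' e ≠ 0 := hsupp (show e ∈ {e | γ e ≠ 0} by
              simp only [Set.mem_setOf_eq]; rw [h1]; omega)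
            have h3 := hconf e
            rw [h1] at h3 ⊢
            obtain ⟨-, hz, hp, hn⟩ := hfacts e
            rcases lt_trichotomy (β e) 0 with hb | hb | hb
            · omega
            · omega
            · have := hp hb
              omega
          · rw [h1]
            omega
          · have h2 : β' e ≠ 0 := hsupp (show e ∈ {e | γ e ≠ 0} by
              simp only [Set.mem_setOf_eq]; rw [h1]; omega)
            have h3 := hconf e
            rw [h1] at h3 ⊢
            obtain ⟨-, hz, hp, hn⟩ := hfacts e
            rcases lt_trichotomy (β e) 0 with hb | hb | hb
            · have := hn hb
              omega
            · omega
            · omega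
    · rw [Multiset.sum_cons, hsum']
      funext e
      simp [hβ'e e]
end

section
/- Let U be a totally unimodular E-by-s matrix with columns β_1,...,β_s, and let C_i = supp(β_i). If e and f both lie in C_i ∩ C_j, then β_i(e)β_j(e) = β_i(f)β_j(f). Consequently |C_i ∩ C_j| = |⟨β_i, β_j⟩|. -/
/-- For a TU matrix `U` with columns `β_i` and supports `C_i`: on `C_i ∩ C_j` the
product `β_i(e)β_j(e)` is constant, and consequently `|C_i ∩ C_j| = |⟨β_i, β_j⟩|`. -/
theorem stmt11 {E : Type*} [Fintype E] [DecidableEq E] {s : ℕ}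
    (U : Matrix E (Fin s) ℤ) (hTU : IsTU U) (i j : Fin s) :
    (∀ e f : E, U e i ≠ 0 → U e j ≠ 0 → U f i ≠ 0 → U f j ≠ 0 →
      U e i * U e j = U f i * U f j) ∧
    (Finset.univ.filter fun e => U e i ≠ 0 ∧ U e j ≠ 0).card
      = (∑ e, U e i * U e j).natAbs := by
  have h1 : ∀ (e : E) (k : Fin s), U e k = -1 ∨ U e k = 0 ∨ U e k = 1 := by
    intro e k
    have := hTU 1 ![e] ![k]
    rw [Matrix.det_fin_one] at this
    simpa [Matrix.det_fin_one, Set.mem_insert_iff] using this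
  have key : ∀ e f : E, U e i ≠ 0 → U e j ≠ 0 → U f i ≠ 0 → U f j ≠ 0 →
      U e i * U e j = U f i * U f j := by
    intro e f he hej hfi hfj
    have h2 := hTU 2 ![e, f] ![i, j]
    rw [Matrix.det_fin_two] at h2
    simp only [Matrix.submatrix_apply, Matrix.cons_val_zero, Matrix.cons_val_one,
      Matrix.head_cons, Set.mem_insert_iff, Set.mem_singleton_iff] at h2
    rcases h1 e i with h | h | h <;> rcases h1 e j with h' | h' | h' <;>
      rcases h1 f i with h'' | h'' | h'' <;> rcases h1 f j with h''' | h''' | h''' <;>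
      simp_all
  refine ⟨key, ?_⟩
  set S := Finset.univ.filter fun e => U e i ≠ 0 ∧ U e j ≠ 0 with hS
  have hsum : ∑ e, U e i * U e j = ∑ e ∈ S, U e i * U e j := by
    rw [hS]
    rw [Finset.sum_filter_of_ne]
    intro e _ hne
    constructor
    · intro h0; exact hne (by rw [h0, zero_mul])
    · intro h0; exact hne (by rw [h0, mul_zero])
  rcases S.eq_empty_or_nonempty with hSe | ⟨e0, he0⟩
  · rw [hsum, hSe]
    simp
  · have he0' : U e0 i ≠ 0 ∧ U e0 j ≠ 0 := by
      rw [hS] at he0; exact (Finset.mem_filter.mp he0).2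
    set c := U e0 i * U e0 j with hc
    have hconst : ∀ e ∈ S, U e i * U e j = c := by
      intro e he
      rw [hS] at he
      obtain ⟨-, he1, he2⟩ := Finset.mem_filter.mp he
      exact key e e0 he1 he2 he0'.1 he0'.2
    rw [hsum, Finset.sum_congr rfl hconst, Finset.sum_const, nsmul_eq_mul]
    have hcabs : c.natAbs = 1 := by
      rcases h1 e0 i with h | h | h <;> rcases h1 e0 j with h' | h' | h' <;>
        simp_all [hc]
    rw [Int.natAbs_mul, hcabs]
    simp
end

section
/- Let U be a totally unimodular E-by-s matrix with columns β_1,...,β_s, Gram matrix A = UᵀU with entries a_{ij}, and C_i = supp(β_i). If e ∈ C_h ∩ C_i ∩ C_j for distinct h, i, j, then a_{hi}·a_{ij}·a_{jh} > 0. -/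
lemma tu_entry {m n : Type*} [Fintype m] [Fintype n] {M : Matrix m n ℤ}
    (hTU : IsTU M) (e : m) (c : n) (hne : M e c ≠ 0) : M e c = -1 ∨ M e c = 1 := by
  have := hTU 1 (fun _ => e) (fun _ => c)
  simp [Matrix.det_fin_one, Set.mem_insert_iff] at this
  rcases this with h | h | h
  · left; exact h
  · exact absurd h hne
  · right; exact h

lemma tu_det2 {m n : Type*} [Fintype m] [Fintype n] {M : Matrix m n ℤ}
    (hTU : IsTU M) (e f : m) (c d : n) :
    M e c * M f d - M e d * M f c = -1 ∨ M e c * M f d - M e d * M f c = 0 ∨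
    M e c * M f d - M e d * M f c = 1 := by
  have := hTU 2 ![e, f] ![c, d]
  rw [Matrix.det_fin_two] at this
  simpa [Matrix.det_fin_two, Set.mem_insert_iff] using this

lemma key {m n : Type*} [Fintype m] [Fintype n] {M : Matrix m n ℤ}
    (hTU : IsTU M) (c d : n) (e : m) (hec : M e c ≠ 0) (hed : M e d ≠ 0) :
    0 < (M e c * M e d) * ∑ f, M f c * M f d := by
  rw [Finset.mul_sum]
  apply Finset.sum_pos'
  · intro f _
    by_cases hfc : M f c = 0
    · simp [hfc]
    by_cases hfd : M f d = 0
    · simp [hfd]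
    have h1 := tu_entry hTU e c hec
    have h2 := tu_entry hTU e d hed
    have h3 := tu_entry hTU f c hfc
    have h4 := tu_entry hTU f d hfd
    have h5 := tu_det2 hTU e f c d
    rcases h1 with h1 | h1 <;> rcases h2 with h2 | h2 <;> rcases h3 with h3 | h3 <;>
      rcases h4 with h4 | h4 <;> rw [h1, h2, h3, h4] at h5 ⊢ <;> omega
  · exact ⟨e, Finset.mem_univ e, mul_self_pos.mpr (mul_ne_zero hec hed)⟩

/-- For a TU matrix `U` with Gram matrix `A = Uᵀ U`: if some row `e` lies in the
supports of three distinct columns `h, i, j`, then `a_{hi} a_{ij} a_{jh} > 0`. -/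
theorem stmt12 {E : Type*} [Fintype E] {s : ℕ}
    (U : Matrix E (Fin s) ℤ) (hTU : IsTU U)
    (h i j : Fin s) (hhi : h ≠ i) (hij : i ≠ j) (hhj : h ≠ j)
    (e : E) (heh : U e h ≠ 0) (hei : U e i ≠ 0) (hej : U e j ≠ 0) :
    0 < (U.transpose * U) h i * ((U.transpose * U) i j) * ((U.transpose * U) j h) := by
  have hA : ∀ a b : Fin s, (U.transpose * U) a b = ∑ f, U f a * U f b := by
    intro a b; simp [Matrix.mul_apply, Matrix.transpose_apply]
  rw [hA, hA, hA]
  have k1 := key hTU h i e heh hei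
  have k2 := key hTU i j e hei hej
  have k3 := key hTU j h e hej heh
  have hq : 0 < (U e h * U e i * U e j) * (U e h * U e i * U e j) :=
    mul_self_pos.mpr (mul_ne_zero (mul_ne_zero heh hei) hej)
  have h4 : 0 < ((U e h * U e i * U e j) * (U e h * U e i * U e j)) *
      ((∑ f, U f h * U f i) * (∑ f, U f i * U f j) * (∑ f, U f j * U f h)) := by
    have := mul_pos (mul_pos k1 k2) k3
    nlinarith [this]
  nlinarith [h4, hq]
end

section
/- Let U be a totally unimodular E-by-s matrix with columns β_1,...,β_s, A = UᵀU, and C_i = supp(β_i). For every nonempty S ⊆ [s], f_A(S) = |∩_{i∈S} C_i|, where f_A(S) = a_{ii} if S = {i}, f_A(S) = 0 if S contains a triple {h,i,j} with a_{hi}a_{ij}a_{jh} ≤ 0, and otherwise f_A(S) = min{|a_{ij}| : {i,j} ⊆ S, i ≠ j} when |S| ≥ 2. -/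
section Stmt13Aux
set_option linter.unusedSectionVars false
open Finset

variable {E : Type*} [Fintype E] [DecidableEq E] {s : ℕ}
variable {U : Matrix E (Fin s) ℤ} {A : Matrix (Fin s) (Fin s) ℤ}

lemma entry_cases (hTU : IsTU U) (e : E) (i : Fin s) :
    U e i = -1 ∨ U e i = 0 ∨ U e i = 1 := by
  have h := hTU 1 (fun _ => e) (fun _ => i)
  simpa [Matrix.det_fin_one] using h

lemma entry_pm (hTU : IsTU U) {e : E} {i : Fin s} (h : U e i ≠ 0) :
    U e i = -1 ∨ U e i = 1 := by
  rcases entry_cases hTU e i with h1 | h1 | h1 <;> tauto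

lemma sign_consistent (hTU : IsTU U) {i j : Fin s} {e f : E}
    (hei : U e i ≠ 0) (hej : U e j ≠ 0) (hfi : U f i ≠ 0) (hfj : U f j ≠ 0) :
    U e i * U e j = U f i * U f j := by
  have h2 := hTU 2 ![e, f] ![i, j]
  rw [Matrix.det_fin_two] at h2
  simp only [Matrix.submatrix_apply, Matrix.cons_val_zero, Matrix.cons_val_one,
    Matrix.head_cons, Set.mem_insert_iff, Set.mem_singleton_iff] at h2
  rcases entry_pm hTU hei with a | a <;> rcases entry_pm hTU hej with b | b <;>
    rcases entry_pm hTU hfi with c | c <;> rcases entry_pm hTU hfj with d | d <;>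
    rw [a, b, c, d] at h2 ⊢ <;> omega

set_option linter.unusedSectionVars false

lemma gram_sum (hA : A = U.transpose * U) (i j : Fin s) :
    A i j = ∑ e ∈ univ.filter (fun e => U e i ≠ 0 ∧ U e j ≠ 0), U e i * U e j := by
  subst hA
  rw [Matrix.mul_apply]
  simp only [Matrix.transpose_apply]
  rw [← Finset.sum_filter_ne_zero]
  apply Finset.sum_congr
  · apply Finset.filter_congr
    intro e _
    simp [mul_ne_zero_iff]
  · intros; rfl

lemma gram_eq (hTU : IsTU U) (hA : A = U.transpose * U) {i j : Fin s} {e0 : E}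
    (h0i : U e0 i ≠ 0) (h0j : U e0 j ≠ 0) :
    A i j = (U e0 i * U e0 j) *
      ((univ.filter (fun e => U e i ≠ 0 ∧ U e j ≠ 0)).card : ℤ) := by
  rw [gram_sum hA i j]
  rw [Finset.sum_congr rfl (fun e he => ?_), Finset.sum_const, nsmul_eq_mul, mul_comm]
  obtain ⟨-, hei, hej⟩ := Finset.mem_filter.mp he
  exact sign_consistent hTU hei hej h0i h0j

lemma absA (hTU : IsTU U) (hA : A = U.transpose * U) (i j : Fin s) :
    |A i j| = ((univ.filter (fun e => U e i ≠ 0 ∧ U e j ≠ 0)).card : ℤ) := by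
  rcases (univ.filter (fun e => U e i ≠ 0 ∧ U e j ≠ 0)).eq_empty_or_nonempty with h | ⟨e0, he0⟩
  · rw [gram_sum hA i j, h]; simp
  · obtain ⟨-, h0i, h0j⟩ := Finset.mem_filter.mp he0
    rw [gram_eq hTU hA h0i h0j, abs_mul, abs_of_nonneg (Int.natCast_nonneg _)]
    have : |U e0 i * U e0 j| = 1 := by
      rcases entry_pm hTU h0i with a | a <;> rcases entry_pm hTU h0j with b | b <;>
        rw [a, b] <;> norm_num
    rw [this, one_mul]

lemma pm_mul (a b : ℤ) (ha : a = -1 ∨ a = 1) (hb : b = -1 ∨ b = 1) :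
    a * b = -1 ∨ a * b = 1 := by
  rcases ha with rfl | rfl <;> rcases hb with rfl | rfl <;> norm_num

lemma pm_key (p q : ℤ) (hp : p = -1 ∨ p = 1) (hq : q = -1 ∨ q = 1)
    (h : p + q = -1 ∨ p + q = 0 ∨ p + q = 1) : p * q = -1 := by
  rcases hp with rfl | rfl <;> rcases hq with rfl | rfl <;> omega

lemma three (hTU : IsTU U) (hA : A = U.transpose * U) {i j l : Fin s}
    (hij : i ≠ j) (hil : i ≠ l) (hjl : j ≠ l)
    (hpos : 0 < A i j * A j l * A l i) :
    (univ.filter fun e => U e i ≠ 0 ∧ U e j ≠ 0 ∧ U e l ≠ 0)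
        = (univ.filter fun e => U e i ≠ 0 ∧ U e j ≠ 0) ∨
    (univ.filter fun e => U e i ≠ 0 ∧ U e j ≠ 0 ∧ U e l ≠ 0)
        = (univ.filter fun e => U e i ≠ 0 ∧ U e l ≠ 0) ∨
    (univ.filter fun e => U e i ≠ 0 ∧ U e j ≠ 0 ∧ U e l ≠ 0)
        = (univ.filter fun e => U e j ≠ 0 ∧ U e l ≠ 0) := by
  by_contra hcon
  push_neg at hcon
  obtain ⟨hne1, hne2, hne3⟩ := hcon
  have hsub1 : (univ.filter fun e => U e i ≠ 0 ∧ U e j ≠ 0 ∧ U e l ≠ 0)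
      ⊆ (univ.filter fun e => U e i ≠ 0 ∧ U e j ≠ 0) := fun e he => by
    simp only [Finset.mem_filter] at he ⊢; exact ⟨he.1, he.2.1, he.2.2.1⟩
  have hsub2 : (univ.filter fun e => U e i ≠ 0 ∧ U e j ≠ 0 ∧ U e l ≠ 0)
      ⊆ (univ.filter fun e => U e i ≠ 0 ∧ U e l ≠ 0) := fun e he => by
    simp only [Finset.mem_filter] at he ⊢; exact ⟨he.1, he.2.1, he.2.2.2⟩
  have hsub3 : (univ.filter fun e => U e i ≠ 0 ∧ U e j ≠ 0 ∧ U e l ≠ 0)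
      ⊆ (univ.filter fun e => U e j ≠ 0 ∧ U e l ≠ 0) := fun e he => by
    simp only [Finset.mem_filter] at he ⊢; exact ⟨he.1, he.2.2.1, he.2.2.2⟩
  obtain ⟨e, he, hnote⟩ := Finset.exists_of_ssubset (lt_of_le_of_ne hsub1 hne1)
  obtain ⟨g, hg, hnotg⟩ := Finset.exists_of_ssubset (lt_of_le_of_ne hsub2 hne2)
  obtain ⟨f, hf, hnotf⟩ := Finset.exists_of_ssubset (lt_of_le_of_ne hsub3 hne3)
  simp only [Finset.mem_filter, Finset.mem_univ, true_and, not_and, not_not] at he hf hg hnote hnotf hnotg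
  obtain ⟨hei, hej⟩ := he
  obtain ⟨hfj, hfl⟩ := hf
  obtain ⟨hgi, hgl⟩ := hg
  have hel : U e l = 0 := hnote hei hej
  have hfi : U f i = 0 := by
    by_contra hc
    exact absurd (hnotf hc hfj) (by simpa using hfl)
  have hgj : U g j = 0 := by
    by_contra hc
    exact absurd (hnotg hgi hc) (by simpa using hgl)
  -- determinant of the 3x3 submatrix
  have hd := hTU 3 ![e, f, g] ![i, j, l]
  rw [Matrix.det_fin_three] at hd
  simp only [Matrix.submatrix_apply, Matrix.cons_val_zero, Matrix.cons_val_one,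
    Matrix.head_cons, Matrix.cons_val_two, Matrix.tail_cons,
    Set.mem_insert_iff, Set.mem_singleton_iff, hel, hfi, hgj, mul_zero, zero_mul,
    sub_zero, zero_sub, add_zero, zero_add] at hd
  have hp : U e i * U f j * U g l = -1 ∨ U e i * U f j * U g l = 1 :=
    pm_mul _ _ (pm_mul _ _ (entry_pm hTU hei) (entry_pm hTU hfj)) (entry_pm hTU hgl)
  have hq : U e j * U f l * U g i = -1 ∨ U e j * U f l * U g i = 1 :=
    pm_mul _ _ (pm_mul _ _ (entry_pm hTU hej) (entry_pm hTU hfl)) (entry_pm hTU hgi)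
  have hpq := pm_key _ _ hp hq hd
  have hAij := gram_eq hTU hA hei hej
  have hAjl := gram_eq hTU hA hfj hfl
  have hAli := gram_eq hTU hA hgl hgi
  set n1 := ((univ.filter fun e' => U e' i ≠ 0 ∧ U e' j ≠ 0).card : ℤ) with hn1def
  set n2 := ((univ.filter fun e' => U e' j ≠ 0 ∧ U e' l ≠ 0).card : ℤ) with hn2def
  set n3 := ((univ.filter fun e' => U e' l ≠ 0 ∧ U e' i ≠ 0).card : ℤ) with hn3def
  have he' : e ∈ univ.filter (fun e' => U e' i ≠ 0 ∧ U e' j ≠ 0) :=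
    Finset.mem_filter.mpr ⟨Finset.mem_univ e, hei, hej⟩
  have hf' : f ∈ univ.filter (fun e' => U e' j ≠ 0 ∧ U e' l ≠ 0) :=
    Finset.mem_filter.mpr ⟨Finset.mem_univ f, hfj, hfl⟩
  have hg' : g ∈ univ.filter (fun e' => U e' l ≠ 0 ∧ U e' i ≠ 0) :=
    Finset.mem_filter.mpr ⟨Finset.mem_univ g, hgl, hgi⟩
  have hn1 : 0 < n1 := by rw [hn1def]; exact_mod_cast Finset.card_pos.mpr ⟨e, he'⟩
  have hn2 : 0 < n2 := by rw [hn2def]; exact_mod_cast Finset.card_pos.mpr ⟨f, hf'⟩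
  have hn3 : 0 < n3 := by rw [hn3def]; exact_mod_cast Finset.card_pos.mpr ⟨g, hg'⟩
  have hneg : A i j * A j l * A l i = -(n1 * n2 * n3) := by
    rw [hAij, hAjl, hAli]
    linear_combination (n1 * n2 * n3) * hpq
  rw [hneg] at hpos
  have := mul_pos (mul_pos hn1 hn2) hn3
  linarith

lemma key_s13 (hTU : IsTU U) (hA : A = U.transpose * U) :
    ∀ S : Finset (Fin s), 2 ≤ S.card →
    (∀ h ∈ S, ∀ i ∈ S, ∀ j ∈ S, h ≠ i → i ≠ j → h ≠ j → 0 < A h i * A i j * A j h) →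
    ∃ i ∈ S, ∃ j ∈ S, i ≠ j ∧
      (@Finset.filter E (fun e => ∀ k ∈ S, U e k ≠ 0) (fun _ => inferInstance) Finset.univ)
        = (univ.filter fun e => U e i ≠ 0 ∧ U e j ≠ 0) := by
  intro S
  induction S using Finset.strongInduction with
  | _ S IH =>
    intro hcard hpos
    rcases eq_or_lt_of_le hcard with h2 | h3
    · obtain ⟨i, j, hij, rfl⟩ := Finset.card_eq_two.mp h2.symm
      refine ⟨i, by simp, j, by simp, hij, ?_⟩
      ext e
      simp [Finset.forall_mem_insert]
    · obtain ⟨l, hl⟩ := Finset.card_pos.mp (by omega : 0 < S.card)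
      have hS'sub : S.erase l ⊂ S := Finset.erase_ssubset hl
      have hcard' : 2 ≤ (S.erase l).card := by
        rw [Finset.card_erase_of_mem hl]; omega
      have hpos' : ∀ h ∈ S.erase l, ∀ i ∈ S.erase l, ∀ j ∈ S.erase l,
          h ≠ i → i ≠ j → h ≠ j → 0 < A h i * A i j * A j h := fun h hh i hi j hj =>
        hpos h (Finset.mem_of_mem_erase hh) i (Finset.mem_of_mem_erase hi)
          j (Finset.mem_of_mem_erase hj)
      obtain ⟨i, hi, j, hj, hij, hIJ⟩ := IH (S.erase l) hS'sub hcard' hpos'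
      have hiS := Finset.mem_of_mem_erase hi
      have hjS := Finset.mem_of_mem_erase hj
      have hil : i ≠ l := (Finset.mem_erase.mp hi).1
      have hjl : j ≠ l := (Finset.mem_erase.mp hj).1
      have hT : (@Finset.filter E (fun e => ∀ k ∈ S, U e k ≠ 0) (fun _ => inferInstance) Finset.univ)
          = (univ.filter fun e => U e i ≠ 0 ∧ U e j ≠ 0 ∧ U e l ≠ 0) := by
        ext e
        simp only [Finset.mem_filter, Finset.mem_univ, true_and]
        constructor
        · intro h
          exact ⟨h i hiS, h j hjS, h l hl⟩
        · rintro ⟨h1, h2, h3⟩ k hk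
          by_cases hkl : k = l
          · subst hkl; exact h3
          · have hk' : k ∈ S.erase l := Finset.mem_erase.mpr ⟨hkl, hk⟩
            have he' : e ∈ (@Finset.filter E (fun e => ∀ k ∈ S.erase l, U e k ≠ 0) (fun _ => inferInstance) Finset.univ) := by
              rw [hIJ]
              exact Finset.mem_filter.mpr ⟨Finset.mem_univ e, h1, h2⟩
            exact (by simpa using he' : ∀ k ∈ S.erase l, U e k ≠ 0) k hk'
      rcases three hTU hA hij hil hjl (hpos i hiS j hjS l hl hij hjl hil) with h | h | h
      · exact ⟨i, hiS, j, hjS, hij, by rw [hT, h]⟩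
      · exact ⟨i, hiS, l, hl, hil, by rw [hT, h]⟩
      · exact ⟨j, hjS, l, hl, hjl, by rw [hT, h]⟩

end Stmt13Aux

/-- For a TU matrix `U` with Gram matrix `A = UᵀU` and column supports `C_i`:
for every nonempty `S`, `f_A(S) = |⋂_{i∈S} C_i|`, where `f_A({i}) = a_{ii}`,
`f_A(S) = 0` if `S` contains a triple `{h,i,j}` with `a_{hi}a_{ij}a_{jh} ≤ 0`,
and otherwise `f_A(S) = min { |a_{ij}| : i ≠ j in S }` when `|S| ≥ 2`. -/

theorem stmt13 {E : Type*} [Fintype E] [DecidableEq E] {s : ℕ}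
    (U : Matrix E (Fin s) ℤ) (hTU : IsTU U)
    (A : Matrix (Fin s) (Fin s) ℤ) (hA : A = U.transpose * U)
    (S : Finset (Fin s)) (hS : S.Nonempty) :
    (∀ i : Fin s, S = {i} →
      ((@Finset.filter E (fun e => ∀ k ∈ S, U e k ≠ 0) (fun _ => inferInstance) Finset.univ).card : ℤ) = A i i) ∧
    ((∃ h ∈ S, ∃ i ∈ S, ∃ j ∈ S, h ≠ i ∧ i ≠ j ∧ h ≠ j ∧ A h i * A i j * A j h ≤ 0) →
      (@Finset.filter E (fun e => ∀ k ∈ S, U e k ≠ 0) (fun _ => inferInstance) Finset.univ).card = 0) ∧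
    (2 ≤ S.card →
      (∀ h ∈ S, ∀ i ∈ S, ∀ j ∈ S, h ≠ i → i ≠ j → h ≠ j → 0 < A h i * A i j * A j h) →
      ∃ i ∈ S, ∃ j ∈ S, i ≠ j ∧
        ((@Finset.filter E (fun e => ∀ k ∈ S, U e k ≠ 0) (fun _ => inferInstance) Finset.univ).card : ℤ) = |A i j| ∧
        ∀ k ∈ S, ∀ l ∈ S, k ≠ l → |A i j| ≤ |A k l|) := by
  open Finset in
  refine ⟨?_, ?_, ?_⟩
  · -- Part 1
    rintro i rfl
    have hnonneg : 0 ≤ A i i := by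
      rw [gram_sum hA i i]
      exact Finset.sum_nonneg fun e _ => mul_self_nonneg _
    have habs := absA hTU hA i i
    rw [abs_of_nonneg hnonneg] at habs
    rw [habs]
    norm_cast
    apply congrArg Finset.card
    ext e
    simp [Finset.mem_filter]
  · -- Part 2
    rintro ⟨h, hh, i, hi, j, hj, hhi, hij, hhj, hle⟩
    rw [Finset.card_eq_zero, Finset.eq_empty_iff_forall_notMem]
    intro e he
    have he : ∀ k ∈ S, U e k ≠ 0 := by simpa using he
    have heh := he h hh
    have hei := he i hi
    have hej := he j hj
    have hAhi := gram_eq hTU hA heh hei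
    have hAij := gram_eq hTU hA hei hej
    have hAjh := gram_eq hTU hA hej heh
    set n1 := ((univ.filter fun e' => U e' h ≠ 0 ∧ U e' i ≠ 0).card : ℤ) with hn1def
    set n2 := ((univ.filter fun e' => U e' i ≠ 0 ∧ U e' j ≠ 0).card : ℤ) with hn2def
    set n3 := ((univ.filter fun e' => U e' j ≠ 0 ∧ U e' h ≠ 0).card : ℤ) with hn3def
    have he1 : e ∈ univ.filter (fun e' => U e' h ≠ 0 ∧ U e' i ≠ 0) :=
      Finset.mem_filter.mpr ⟨Finset.mem_univ e, heh, hei⟩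
    have he2 : e ∈ univ.filter (fun e' => U e' i ≠ 0 ∧ U e' j ≠ 0) :=
      Finset.mem_filter.mpr ⟨Finset.mem_univ e, hei, hej⟩
    have he3 : e ∈ univ.filter (fun e' => U e' j ≠ 0 ∧ U e' h ≠ 0) :=
      Finset.mem_filter.mpr ⟨Finset.mem_univ e, hej, heh⟩
    have hn1 : 0 < n1 := by rw [hn1def]; exact_mod_cast Finset.card_pos.mpr ⟨e, he1⟩
    have hn2 : 0 < n2 := by rw [hn2def]; exact_mod_cast Finset.card_pos.mpr ⟨e, he2⟩
    have hn3 : 0 < n3 := by rw [hn3def]; exact_mod_cast Finset.card_pos.mpr ⟨e, he3⟩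
    have ha : U e h * U e h = 1 := by
      rcases entry_pm hTU heh with a | a <;> rw [a] <;> norm_num
    have hb : U e i * U e i = 1 := by
      rcases entry_pm hTU hei with a | a <;> rw [a] <;> norm_num
    have hc : U e j * U e j = 1 := by
      rcases entry_pm hTU hej with a | a <;> rw [a] <;> norm_num
    have hprod : A h i * A i j * A j h = n1 * n2 * n3 := by
      rw [hAhi, hAij, hAjh]
      linear_combination (U e i * U e i * U e j * U e j * n1 * n2 * n3) * ha +
        (U e j * U e j * n1 * n2 * n3) * hb + (n1 * n2 * n3) * hc
    rw [hprod] at hle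
    have := mul_pos (mul_pos hn1 hn2) hn3
    linarith
  · -- Part 3
    intro hcard hpos
    obtain ⟨i, hi, j, hj, hij, hEq⟩ := key_s13 hTU hA S hcard hpos
    refine ⟨i, hi, j, hj, hij, ?_, ?_⟩
    · rw [hEq, absA hTU hA i j]
    · intro k hk l hl hkl
      rw [absA hTU hA i j, absA hTU hA k l]
      have hsub : (univ.filter fun e => U e i ≠ 0 ∧ U e j ≠ 0)
          ⊆ (univ.filter fun e => U e k ≠ 0 ∧ U e l ≠ 0) := by
        rw [← hEq]
        intro e he
        have he : ∀ k ∈ S, U e k ≠ 0 := by simpa using he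
        exact Finset.mem_filter.mpr ⟨Finset.mem_univ e, he k hk, he l hl⟩
      exact_mod_cast Finset.card_le_card hsub
end

section
/- Let U and Q be totally unimodular matrices (with no zero rows) such that UᵀU = QᵀQ. Then U can be obtained from Q by permuting the rows and multiplying some rows and columns by -1. -/
section Aux
variable {m m' s : ℕ} {U : Matrix (Fin m) (Fin s) ℤ} {Q : Matrix (Fin m') (Fin s) ℤ}

lemma tu_entry_s15 (hU : IsTU U) (i : Fin m) (j : Fin s) :
    U i j = -1 ∨ U i j = 0 ∨ U i j = 1 := by
  have h := hU 1 (fun _ => i) (fun _ => j)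
  rw [Matrix.det_fin_one] at h
  simpa using h

lemma tu_sub {m₂ s₂ : ℕ} (hU : IsTU U) (e : Fin m₂ → Fin m) (g0 : Fin s₂ → Fin s) :
    IsTU (U.submatrix e g0) := by
  intro k f g
  rw [Matrix.submatrix_submatrix]
  exact hU k _ _

lemma tu_pair_nonneg (hU : IsTU U) (i i' : Fin m) (j l : Fin s) :
    0 ≤ (U i j * U i l) * (U i' j * U i' l) := by
  by_cases h0 : (U i j * U i l) * (U i' j * U i' l) = 0
  · omega
  have h1 : U i j ≠ 0 := fun h => h0 (by rw [h]; ring)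
  have h2 : U i l ≠ 0 := fun h => h0 (by rw [h]; ring)
  have h3 : U i' j ≠ 0 := fun h => h0 (by rw [h]; ring)
  have h4 : U i' l ≠ 0 := fun h => h0 (by rw [h]; ring)
  have sq : ∀ (a : Fin m) (b : Fin s), U a b ≠ 0 → U a b * U a b = 1 := by
    intro a b hab
    rcases tu_entry_s15 hU a b with h | h | h <;> simp [h] at hab ⊢
  have hd := hU 2 ![i, i'] ![j, l]
  rw [Matrix.det_fin_two] at hd
  simp only [Matrix.submatrix_apply, Matrix.cons_val_zero, Matrix.cons_val_one,
    Matrix.head_cons] at hd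
  have hd' : U i j * U i' l - U i l * U i' j = -1 ∨ U i j * U i' l - U i l * U i' j = 0 ∨
      U i j * U i' l - U i l * U i' j = 1 := by simpa using hd
  have hp : (U i j * U i' l) * (U i j * U i' l) = 1 := by
    have := sq i j h1; have := sq i' l h4; nlinarith
  have hq : (U i l * U i' j) * (U i l * U i' j) = 1 := by
    have := sq i l h2; have := sq i' j h3; nlinarith
  have key : 0 ≤ (U i j * U i' l) * (U i l * U i' j) := by
    rcases hd' with h | h | h <;> nlinarith
  nlinarith [key]


lemma gram_apply (U : Matrix (Fin m) (Fin s) ℤ) (j l : Fin s) :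
    (U.transpose * U) j l = ∑ a, U a j * U a l := by
  simp [Matrix.mul_apply, Matrix.transpose_apply]

lemma gram_pos (hU : IsTU U) (i : Fin m) (j l : Fin s) (h : U i j * U i l ≠ 0) :
    0 < (U i j * U i l) * ((U.transpose * U) j l) := by
  rw [gram_apply, Finset.mul_sum]
  apply Finset.sum_pos'
  · intro a _
    exact tu_pair_nonneg hU i a j l
  · exact ⟨i, Finset.mem_univ i, mul_self_pos.mpr h⟩


lemma sq_one_of_ne (hU : IsTU U) {i : Fin m} {j : Fin s} (h : U i j ≠ 0) :
    U i j * U i j = 1 := by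
  rcases tu_entry_s15 hU i j with h' | h' | h' <;> simp [h'] at h ⊢

lemma cross (hU : IsTU U) (hQ : IsTU Q)
    (hGram : U.transpose * U = Q.transpose * Q) (i : Fin m) (k : Fin m') (j l : Fin s)
    (hu : U i j * U i l ≠ 0) (hq : Q k j * Q k l ≠ 0) :
    U i j * U i l = Q k j * Q k l := by
  have h1 := gram_pos hU i j l hu
  have h2 := gram_pos hQ k j l hq
  rw [← hGram] at h2
  set X := (U.transpose * U) j l
  set p := U i j * U i l with hp
  set q := Q k j * Q k l with hq'
  have hup : U i j ≠ 0 := fun h => hu (by rw [hp, h]; ring)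
  have hul : U i l ≠ 0 := fun h => hu (by rw [hp, h]; ring)
  have hqp : Q k j ≠ 0 := fun h => hq (by rw [hq', h]; ring)
  have hql : Q k l ≠ 0 := fun h => hq (by rw [hq', h]; ring)
  have hpp : p * p = 1 := by
    have := sq_one_of_ne hU hup; have := sq_one_of_ne hU hul; rw [hp]; nlinarith
  have hqq : q * q = 1 := by
    have := sq_one_of_ne hQ hqp; have := sq_one_of_ne hQ hql; rw [hq']; nlinarith
  have hpq : 0 < p * q := by nlinarith [mul_pos h1 h2, sq_nonneg X]
  have hp1 : p = 1 ∨ p = -1 := mul_self_eq_one_iff.mp hpp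
  have hq1 : q = 1 ∨ q = -1 := mul_self_eq_one_iff.mp hqq
  rcases hp1 with h | h <;> rcases hq1 with h' | h' <;> rw [h, h'] at hpq ⊢ <;> norm_num at hpq

lemma exists_q_of_pair (hU : IsTU U) (hQ : IsTU Q)
    (hGram : U.transpose * U = Q.transpose * Q) (i : Fin m) (j l : Fin s)
    (h : U i j * U i l ≠ 0) : ∃ k, Q k j ≠ 0 ∧ Q k l ≠ 0 := by
  have h1 := gram_pos hU i j l h
  have hX : (Q.transpose * Q) j l ≠ 0 := by
    rw [← hGram]; intro h0; rw [h0, mul_zero] at h1; exact lt_irrefl 0 h1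
  rw [gram_apply] at hX
  obtain ⟨k, _, hk⟩ := Finset.exists_ne_zero_of_sum_ne_zero hX
  exact ⟨k, fun h => hk (by rw [h]; ring), fun h => hk (by rw [h]; ring)⟩


lemma cover (hU : IsTU U) (hQ : IsTU Q)
    (hGram : U.transpose * U = Q.transpose * Q) (i : Fin m) :
    ∀ (n : ℕ) (S : Finset (Fin s)), S.card = n → S.Nonempty →
      (∀ j ∈ S, U i j ≠ 0) → ∃ k, ∀ j ∈ S, Q k j ≠ 0 := by
  intro n
  induction n using Nat.strong_induction_on with
  | _ n IH =>
  intro S hcard hne hS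
  match n, hcard with
  | 0, hcard => exact absurd (Finset.card_eq_zero.mp hcard ▸ hne) (by simp)
  | 1, hcard =>
    obtain ⟨j, rfl⟩ := Finset.card_eq_one.mp hcard
    have hj : U i j ≠ 0 := hS j (Finset.mem_singleton_self j)
    obtain ⟨k, hk, -⟩ := exists_q_of_pair hU hQ hGram i j j (mul_ne_zero hj hj)
    exact ⟨k, fun x hx => (Finset.mem_singleton.mp hx) ▸ hk⟩
  | 2, hcard =>
    obtain ⟨j, l, hjl, rfl⟩ := Finset.card_eq_two.mp hcard
    have hj : U i j ≠ 0 := hS j (by simp)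
    have hl : U i l ≠ 0 := hS l (by simp)
    obtain ⟨k, hk1, hk2⟩ := exists_q_of_pair hU hQ hGram i j l (mul_ne_zero hj hl)
    refine ⟨k, fun x hx => ?_⟩
    rcases Finset.mem_insert.mp hx with rfl | hx
    · exact hk1
    · exact (Finset.mem_singleton.mp hx) ▸ hk2
  | (n + 3), hcard =>
    -- two distinct elements
    obtain ⟨j, hj, h, hh, hjh⟩ := Finset.one_lt_card.mp (by omega : 1 < S.card)
    obtain ⟨k₁, hk₁⟩ := IH (n + 2) (by omega) (S.erase h)
      (by rw [Finset.card_erase_of_mem hh, hcard]; omega)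
      (Finset.card_pos.mp (by rw [Finset.card_erase_of_mem hh, hcard]; omega))
      (fun x hx => hS x (Finset.mem_of_mem_erase hx))
    obtain ⟨k₂, hk₂⟩ := IH (n + 2) (by omega) (S.erase j)
      (by rw [Finset.card_erase_of_mem hj, hcard]; omega)
      (Finset.card_pos.mp (by rw [Finset.card_erase_of_mem hj, hcard]; omega))
      (fun x hx => hS x (Finset.mem_of_mem_erase hx))
    obtain ⟨k₃, hk₃⟩ := IH 2 (by omega) {j, h}
      (by rw [Finset.card_insert_of_notMem (by simpa using hjh), Finset.card_singleton])
      ⟨j, by simp⟩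
      (fun x hx => by rcases Finset.mem_insert.mp hx with rfl | hx
                      · exact hS x hj
                      · exact hS x ((Finset.mem_singleton.mp hx) ▸ hh))
    by_cases hb1 : Q k₁ h ≠ 0
    · refine ⟨k₁, fun x hx => ?_⟩
      rcases eq_or_ne x h with rfl | hxh
      · exact hb1
      · exact hk₁ x (Finset.mem_erase.mpr ⟨hxh, hx⟩)
    by_cases hb2 : Q k₂ j ≠ 0
    · refine ⟨k₂, fun x hx => ?_⟩
      rcases eq_or_ne x j with rfl | hxj
      · exact hb2
      · exact hk₂ x (Finset.mem_erase.mpr ⟨hxj, hx⟩)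
    by_cases hb3 : ∀ a ∈ S, Q k₃ a ≠ 0
    · exact ⟨k₃, hb3⟩
    push_neg at hb1 hb2 hb3
    exfalso
    obtain ⟨a, ha, ha0⟩ := hb3
    have haj : a ≠ j := fun hE => (hk₃ j (by simp)) (hE ▸ ha0)
    have hah : a ≠ h := fun hE => (hk₃ h (by simp)) (hE ▸ ha0)
    -- entries
    have x1 : Q k₁ a ≠ 0 := hk₁ a (Finset.mem_erase.mpr ⟨hah, ha⟩)
    have y1 : Q k₁ j ≠ 0 := hk₁ j (Finset.mem_erase.mpr ⟨hjh, hj⟩)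
    have z1 : Q k₂ a ≠ 0 := hk₂ a (Finset.mem_erase.mpr ⟨haj, ha⟩)
    have w1 : Q k₂ h ≠ 0 := hk₂ h (Finset.mem_erase.mpr ⟨Ne.symm hjh, hh⟩)
    have v1 : Q k₃ h ≠ 0 := hk₃ h (by simp)
    have t1 : Q k₃ j ≠ 0 := hk₃ j (by simp)
    have ua : U i a ≠ 0 := hS a ha
    have uh : U i h ≠ 0 := hS h hh
    have uj : U i j ≠ 0 := hS j hj
    -- cross relations
    have c1 : U i a * U i j = Q k₁ a * Q k₁ j :=
      cross hU hQ hGram i k₁ a j (mul_ne_zero ua uj) (mul_ne_zero x1 y1)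
    have c2 : U i a * U i h = Q k₂ a * Q k₂ h :=
      cross hU hQ hGram i k₂ a h (mul_ne_zero ua uh) (mul_ne_zero z1 w1)
    have c3 : U i h * U i j = Q k₃ h * Q k₃ j :=
      cross hU hQ hGram i k₃ h j (mul_ne_zero uh uj) (mul_ne_zero v1 t1)
    -- 3x3 determinant
    have hd := hQ 3 ![k₁, k₂, k₃] ![a, h, j]
    rw [Matrix.det_fin_three] at hd
    simp only [Matrix.submatrix_apply, Matrix.cons_val_zero, Matrix.cons_val_one,
      Matrix.head_cons, Matrix.cons_val_two, Matrix.tail_cons, Matrix.head_fin_const] at hd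
    rw [hb1, hb2, ha0] at hd
    have hd' : Q k₁ a * (Q k₂ h * Q k₃ j) + Q k₁ j * (Q k₂ a * Q k₃ h) = -1 ∨
        Q k₁ a * (Q k₂ h * Q k₃ j) + Q k₁ j * (Q k₂ a * Q k₃ h) = 0 ∨
        Q k₁ a * (Q k₂ h * Q k₃ j) + Q k₁ j * (Q k₂ a * Q k₃ h) = 1 := by
      have : Q k₁ a * Q k₂ h * Q k₃ j - Q k₁ a * 0 * Q k₃ h - 0 * Q k₂ a * Q k₃ j +
          0 * 0 * 0 + Q k₁ j * Q k₂ a * Q k₃ h - Q k₁ j * Q k₂ h * 0 =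
          Q k₁ a * (Q k₂ h * Q k₃ j) + Q k₁ j * (Q k₂ a * Q k₃ h) := by ring
      rw [this] at hd
      simpa using hd
    set A := Q k₁ a * (Q k₂ h * Q k₃ j) with hA
    set B := Q k₁ j * (Q k₂ a * Q k₃ h) with hB
    have hAB : A * B = 1 := by
      have e1 : A * B = (Q k₁ a * Q k₁ j) * ((Q k₂ a * Q k₂ h) * (Q k₃ h * Q k₃ j)) := by
        rw [hA, hB]; ring
      rw [e1, ← c1, ← c2, ← c3]
      have s1 := sq_one_of_ne hU ua
      have s2 := sq_one_of_ne hU uh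
      have s3 := sq_one_of_ne hU uj
      have e2 : U i a * U i j * (U i a * U i h * (U i h * U i j)) =
          (U i a * U i a) * ((U i h * U i h) * (U i j * U i j)) := by ring
      rw [e2, s1, s2, s3]; norm_num
    have hAA : A * A = 1 := by
      have s1 := sq_one_of_ne hQ x1
      have s2 := sq_one_of_ne hQ w1
      have s3 := sq_one_of_ne hQ t1
      have e3 : Q k₁ a * (Q k₂ h * Q k₃ j) * (Q k₁ a * (Q k₂ h * Q k₃ j)) =
          (Q k₁ a * Q k₁ a) * ((Q k₂ h * Q k₂ h) * (Q k₃ j * Q k₃ j)) := by ring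
      rw [hA, e3, s1, s2, s3]; norm_num
    have hBA : B = A := by
      have h5 : A * (A - B) = 0 := by linear_combination hAA - hAB
      have hA0 : A ≠ 0 := fun h => by rw [h] at hAA; simp at hAA
      have := mul_eq_zero.mp h5
      omega
    rw [hBA] at hd'
    have hA1 : A = 1 ∨ A = -1 := mul_self_eq_one_iff.mp hAA
    omega


/-- If the supports of row `i` of `U` and row `k` of `Q` coincide, the rows agree up
to a sign. -/
lemma row_eq_of_supp_eq (hU : IsTU U) (hQ : IsTU Q)
    (hGram : U.transpose * U = Q.transpose * Q) (i : Fin m) (k : Fin m')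
    (hsupp : ∀ j, U i j ≠ 0 ↔ Q k j ≠ 0) (hne : ∃ j, U i j ≠ 0) :
    ∃ r : ℤ, (r = 1 ∨ r = -1) ∧ ∀ j, U i j = r * Q k j := by
  obtain ⟨j₀, hj₀⟩ := hne
  have hq₀ : Q k j₀ ≠ 0 := (hsupp j₀).mp hj₀
  refine ⟨U i j₀ * Q k j₀, ?_, ?_⟩
  · rcases tu_entry_s15 hU i j₀ with h | h | h <;> rcases tu_entry_s15 hQ k j₀ with h' | h' | h' <;>
      simp [h, h'] at hj₀ hq₀ ⊢
  · intro j
    by_cases hj : U i j = 0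
    · rw [hj, (not_iff_not.mpr (hsupp j)).mp (by simpa using hj) |> not_ne_iff.mp, mul_zero]
    · have hqj : Q k j ≠ 0 := (hsupp j).mp hj
      have hc := cross hU hQ hGram i k j j₀ (mul_ne_zero hj hj₀) (mul_ne_zero hqj hq₀)
      have h2 := sq_one_of_ne hU hj₀
      linear_combination U i j₀ * hc - U i j * h2 + U i j

lemma match_row (hU : IsTU U) (hQ : IsTU Q)
    (hGram : U.transpose * U = Q.transpose * Q)
    (hUr : ∀ i, ∃ j, U i j ≠ 0) (hQr : ∀ i, ∃ j, Q i j ≠ 0) (hm : 0 < m) :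
    ∃ (i : Fin m) (k : Fin m') (r : ℤ), (r = 1 ∨ r = -1) ∧ ∀ j, U i j = r * Q k j := by
  classical
  set sU : Fin m → Finset (Fin s) := fun i => Finset.univ.filter (fun j => U i j ≠ 0) with hsU
  set sQ : Fin m' → Finset (Fin s) := fun k => Finset.univ.filter (fun j => Q k j ≠ 0) with hsQ
  set F : Fin m ⊕ Fin m' → ℕ := Sum.elim (fun i => (sU i).card) (fun k => (sQ k).card) with hF
  have hne : (Finset.univ : Finset (Fin m ⊕ Fin m')).Nonempty :=
    ⟨Sum.inl ⟨0, hm⟩, Finset.mem_univ _⟩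
  obtain ⟨t, -, ht⟩ := Finset.exists_mem_eq_sup Finset.univ hne F
  have hmax : ∀ w : Fin m ⊕ Fin m', F w ≤ F t := by
    intro w; rw [← ht]; exact Finset.le_sup (Finset.mem_univ w)
  rcases t with i | k
  · -- max is a row of U
    obtain ⟨k, hk⟩ := cover hU hQ hGram i (sU i).card (sU i) rfl
      (by obtain ⟨j, hj⟩ := hUr i; exact ⟨j, by simp [hsU, hj]⟩)
      (fun j hj => by simpa [hsU] using hj)
    have hsub : sU i ⊆ sQ k := by
      intro j hj
      simp only [hsQ, Finset.mem_filter, Finset.mem_univ, true_and]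
      exact hk j hj
    have hcard : (sQ k).card ≤ (sU i).card := hmax (Sum.inr k)
    have heq : sU i = sQ k := Finset.eq_of_subset_of_card_le hsub hcard
    have hsupp : ∀ j, U i j ≠ 0 ↔ Q k j ≠ 0 := by
      intro j
      constructor
      · intro h
        have hmem : j ∈ sQ k := heq ▸ (by simp [hsU, h] : j ∈ sU i)
        simpa [hsQ] using hmem
      · intro h
        have hmem : j ∈ sU i := heq.symm ▸ (by simp [hsQ, h] : j ∈ sQ k)
        simpa [hsU] using hmem
    obtain ⟨r, hr, hrow⟩ := row_eq_of_supp_eq hU hQ hGram i k hsupp (hUr i)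
    exact ⟨i, k, r, hr, hrow⟩
  · -- max is a row of Q; apply everything with roles swapped
    obtain ⟨i, hi⟩ := cover hQ hU hGram.symm k (sQ k).card (sQ k) rfl
      (by obtain ⟨j, hj⟩ := hQr k; exact ⟨j, by simp [hsQ, hj]⟩)
      (fun j hj => by simpa [hsQ] using hj)
    have hsub : sQ k ⊆ sU i := by
      intro j hj
      simp only [hsU, Finset.mem_filter, Finset.mem_univ, true_and]
      exact hi j hj
    have hcard : (sU i).card ≤ (sQ k).card := hmax (Sum.inl i)
    have heq : sQ k = sU i := Finset.eq_of_subset_of_card_le hsub hcard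
    have hsupp : ∀ j, U i j ≠ 0 ↔ Q k j ≠ 0 := by
      intro j
      constructor
      · intro h
        have hmem : j ∈ sQ k := heq.symm ▸ (by simp [hsU, h] : j ∈ sU i)
        simpa [hsQ] using hmem
      · intro h
        have hmem : j ∈ sU i := heq ▸ (by simp [hsQ, h] : j ∈ sQ k)
        simpa [hsU] using hmem
    obtain ⟨r, hr, hrow⟩ := row_eq_of_supp_eq hU hQ hGram i k hsupp (hUr i)
    exact ⟨i, k, r, hr, hrow⟩

end Aux

section Key

lemma key_s15 : ∀ (m : ℕ) {s : ℕ} (m' : ℕ) (U : Matrix (Fin m) (Fin s) ℤ)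
    (Q : Matrix (Fin m') (Fin s) ℤ),
    IsTU U → IsTU Q → (∀ i, ∃ j, U i j ≠ 0) → (∀ i, ∃ j, Q i j ≠ 0) →
    U.transpose * U = Q.transpose * Q →
    ∃ (σ : Fin m ≃ Fin m') (r : Fin m → ℤ), (∀ i, r i = 1 ∨ r i = -1) ∧
      ∀ i j, U i j = r i * Q (σ i) j := by
  intro m
  induction m with
  | zero =>
    intro s m' U Q hU hQ hUr hQr hGram
    have hempty : IsEmpty (Fin m') := by
      constructor
      intro k
      obtain ⟨j, hj⟩ := hQr k
      have h0 : (U.transpose * U) j j = 0 := by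
        rw [Matrix.mul_apply]
        simp
      have h1 := gram_pos hQ k j j (mul_ne_zero hj hj)
      rw [← hGram, h0, mul_zero] at h1
      exact lt_irrefl 0 h1
    exact ⟨Equiv.equivOfIsEmpty _ _, fun _ => 1, fun i => i.elim0, fun i => i.elim0⟩
  | succ m IHm =>
    intro s m' U Q hU hQ hUr hQr hGram
    obtain ⟨i, k, r₀, hr₀, hrow⟩ := match_row hU hQ hGram hUr hQr (Nat.succ_pos m)
    have hr₀sq : r₀ * r₀ = 1 := by rcases hr₀ with h | h <;> rw [h] <;> norm_num
    cases m' with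
    | zero => exact k.elim0
    | succ m'' =>
    set U' := U.submatrix i.succAbove id with hU'def
    set Q' := Q.submatrix k.succAbove id with hQ'def
    have hU' : IsTU U' := tu_sub hU _ _
    have hQ' : IsTU Q' := tu_sub hQ _ _
    have hU'r : ∀ t, ∃ j, U' t j ≠ 0 := fun t => hUr (i.succAbove t)
    have hQ'r : ∀ t, ∃ j, Q' t j ≠ 0 := fun t => hQr (k.succAbove t)
    have hGram' : U'.transpose * U' = Q'.transpose * Q' := by
      ext j l
      have hL : (U'.transpose * U') j l = ∑ a : Fin m, U (i.succAbove a) j * U (i.succAbove a) l := by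
        rw [Matrix.mul_apply]
        simp [hU'def, Matrix.submatrix_apply]
      have hR : (Q'.transpose * Q') j l = ∑ a : Fin m'', Q (k.succAbove a) j * Q (k.succAbove a) l := by
        rw [Matrix.mul_apply]
        simp [hQ'def, Matrix.submatrix_apply]
      have hsumU := Fin.sum_univ_succAbove (fun a => U a j * U a l) i
      have hsumQ := Fin.sum_univ_succAbove (fun a => Q a j * Q a l) k
      have hG : ∑ a, U a j * U a l = ∑ a, Q a j * Q a l := by
        have h1 : (U.transpose * U) j l = ∑ a, U a j * U a l := by
          rw [Matrix.mul_apply]; rfl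
        have h2 : (Q.transpose * Q) j l = ∑ a, Q a j * Q a l := by
          rw [Matrix.mul_apply]; rfl
        rw [← h1, ← h2, hGram]
      have hik : U i j * U i l = Q k j * Q k l := by
        rw [hrow j, hrow l]
        linear_combination (Q k j * Q k l) * hr₀sq
      rw [hL, hR]
      have := hG
      rw [hsumU, hsumQ] at this
      simpa [hik] using this
    obtain ⟨σ', r', hr', hrow'⟩ := IHm m'' U' Q' hU' hQ' hU'r hQ'r hGram'
    refine ⟨(finSuccEquiv' i).trans ((Equiv.optionCongr σ').trans (finSuccEquiv' k).symm),
      i.insertNth r₀ r', ?_, ?_⟩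
    · intro t
      refine Fin.succAboveCases i ?_ ?_ t
      · rw [Fin.insertNth_apply_same]; exact hr₀
      · intro t'; rw [Fin.insertNth_apply_succAbove]; exact hr' t'
    · intro t j
      refine Fin.succAboveCases i ?_ ?_ t
      · have hσ : ((finSuccEquiv' i).trans ((Equiv.optionCongr σ').trans (finSuccEquiv' k).symm)) i = k := by
          simp [Equiv.trans_apply, finSuccEquiv'_at, finSuccEquiv'_symm_none]
        rw [hσ, Fin.insertNth_apply_same]
        exact hrow j
      · intro t'
        have hσ : ((finSuccEquiv' i).trans ((Equiv.optionCongr σ').trans (finSuccEquiv' k).symm))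
            (i.succAbove t') = k.succAbove (σ' t') := by
          simp [Equiv.trans_apply, finSuccEquiv'_succAbove, Equiv.optionCongr,
            finSuccEquiv'_symm_some]
        rw [hσ, Fin.insertNth_apply_succAbove]
        have := hrow' t' j
        simpa [hU'def, hQ'def] using this

end Key

/-- If `U` and `Q` are TU matrices with no zero rows and equal Gram matrices
`UᵀU = QᵀQ`, then `U` is obtained from `Q` by permuting rows and multiplying some
rows and columns by `-1`. -/
theorem stmt15 {m m' s : ℕ}
    (U : Matrix (Fin m) (Fin s) ℤ) (hUTU : IsTU U)
    (Q : Matrix (Fin m') (Fin s) ℤ) (hQTU : IsTU Q)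
    (hUrows : ∀ i, ∃ j, U i j ≠ 0) (hQrows : ∀ i, ∃ j, Q i j ≠ 0)
    (hGram : U.transpose * U = Q.transpose * Q) :
    ∃ (σ : Fin m ≃ Fin m') (r : Fin m → ℤ) (c : Fin s → ℤ),
      (∀ i, r i = 1 ∨ r i = -1) ∧ (∀ j, c j = 1 ∨ c j = -1) ∧
      ∀ i j, U i j = r i * c j * Q (σ i) j := by
  obtain ⟨σ, r, hr, hrow⟩ := key_s15 m m' U Q hUTU hQTU hUrows hQrows hGram
  exact ⟨σ, r, fun _ => 1, hr, fun j => Or.inl rfl, fun i j => by rw [hrow i j]; ring⟩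
end

section
/- Let M be a TU matrix representing a regular matroid of rank r on an m-element ground set E, with s = m - r. If Q is an E-by-s integer matrix whose columns form a ℤ-basis of the lattice Λ = ker(M) ∩ ℤ^E, then Q is weakly unimodular: every s-by-s submatrix of Q has determinant in {-1,0,+1}. -/
/-- If the columns of an integer matrix `Q` form a `ℤ`-basis of the lattice of integer
flows `ker M ∩ ℤ^E` of an `r×m` TU matrix `M` of rank `r` (with `s = m - r`), then `Q`
is weakly unimodular: every `s×s` submatrix has determinant in `{-1,0,1}`. -/
theorem stmt17 {r m s : ℕ} (M : Matrix (Fin r) (Fin m) ℤ) (hTU : IsTU M)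
    (hrank : (M.map (Int.cast : ℤ → ℚ)).rank = r) (hs : s = m - r)
    (Q : Matrix (Fin m) (Fin s) ℤ)
    (hcols : ∀ j, M.mulVec (fun i => Q i j) = 0)
    (hbasis : ∀ β : Fin m → ℤ, M.mulVec β = 0 → ∃! c : Fin s → ℤ, Q.mulVec c = β) :
    ∀ f : Fin s → Fin m, (Q.submatrix f id).det ∈ ({-1, 0, 1} : Set ℤ) := by
  intro f
  by_cases hd : (Q.submatrix f id).det = 0
  · exact Or.inr (Or.inl hd)
  set A := Q.submatrix f id with hA
  -- f is injective
  have hfinj : Function.Injective f := by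
    intro a b hab
    by_contra hne
    apply hd
    refine Matrix.det_zero_of_row_eq hne ?_
    funext x
    simp [hA, Matrix.submatrix_apply, hab]
  have hrm : r ≤ m := by
    have h1 := Matrix.rank_le_card_width (M.map (Int.cast : ℤ → ℚ))
    rw [hrank, Fintype.card_fin] at h1
    exact h1
  -- the complement of the range of f
  set T : Finset (Fin m) := (Finset.univ.image f)ᶜ with hT
  have hTcard : T.card = r := by
    have h2 : (Finset.univ.image f).card = s := by
      rw [Finset.card_image_of_injective _ hfinj, Finset.card_univ, Fintype.card_fin]
    rw [hT, Finset.card_compl, h2, Fintype.card_fin]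
    omega
  set g : Fin r → Fin m := fun i => ((T.orderIsoOfFin hTcard i : T) : Fin m) with hg
  have hgT : ∀ i, g i ∈ T := fun i => (T.orderIsoOfFin hTcard i).2
  set F : Fin s ⊕ Fin r → Fin m := Sum.elim f g with hF
  have hFinj : Function.Injective F := by
    intro a b hab
    rcases a with a | a <;> rcases b with b | b <;>
      simp only [hF, Sum.elim_inl, Sum.elim_inr] at hab
    · exact congrArg Sum.inl (hfinj hab)
    · exfalso
      have h3 := hgT b
      rw [hT, Finset.mem_compl] at h3
      exact h3 (Finset.mem_image.2 ⟨a, Finset.mem_univ a, hab⟩)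
    · exfalso
      have h3 := hgT a
      rw [hT, Finset.mem_compl] at h3
      exact h3 (Finset.mem_image.2 ⟨b, Finset.mem_univ b, hab.symm⟩)
    · have : a = b := by
        have := (T.orderIsoOfFin hTcard).injective (Subtype.ext hab)
        exact this
      exact congrArg Sum.inr this
  have hFbij : Function.Bijective F := by
    rw [Fintype.bijective_iff_injective_and_card]
    refine ⟨hFinj, ?_⟩
    simp only [Fintype.card_sum, Fintype.card_fin]
    omega
  set e : Fin s ⊕ Fin r ≃ Fin m := Equiv.ofBijective F hFbij with he
  have heL : ∀ j : Fin s, e (Sum.inl j) = f j := fun _ => rfl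
  have heR : ∀ j : Fin r, e (Sum.inr j) = g j := fun _ => rfl
  have hesymmL : ∀ j : Fin s, e.symm (f j) = Sum.inl j := by
    intro j
    rw [← heL j, Equiv.symm_apply_apply]
  have hesymmR : ∀ j : Fin r, e.symm (g j) = Sum.inr j := by
    intro j
    rw [← heR j, Equiv.symm_apply_apply]
  -- computing M.mulVec on vectors defined via e
  have hmv : ∀ (w : Fin s ⊕ Fin r → ℤ) (i : Fin r),
      M.mulVec (fun j => w (e.symm j)) i
        = (∑ j : Fin s, M i (f j) * w (Sum.inl j))
          + ∑ j : Fin r, M i (g j) * w (Sum.inr j) := by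
    intro w i
    have h4 : M.mulVec (fun j => w (e.symm j)) i
        = ∑ j : Fin m, M i j * w (e.symm j) := by
      simp [Matrix.mulVec, dotProduct]
    rw [h4]
    rw [← Equiv.sum_comp e (fun j => M i j * w (e.symm j))]
    rw [Fintype.sum_sum_type]
    congr 1
    · exact Finset.sum_congr rfl fun j _ => by rw [heL, hesymmL]
    · exact Finset.sum_congr rfl fun j _ => by rw [heR, hesymmR]
  set N : Matrix (Fin r) (Fin r) ℤ := M.submatrix id g with hN
  -- N is nonsingular
  have hNdet : N.det ≠ 0 := by
    intro h0
    obtain ⟨v, hv0, hvk⟩ := Matrix.exists_mulVec_eq_zero_iff.2 h0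
    set β : Fin m → ℤ := fun j => Sum.elim (0 : Fin s → ℤ) v (e.symm j) with hβ
    have hMβ : M.mulVec β = 0 := by
      funext i
      rw [hβ]
      rw [hmv (Sum.elim (0 : Fin s → ℤ) v) i]
      simp only [Sum.elim_inl, Sum.elim_inr, Pi.zero_apply, mul_zero, Finset.sum_const_zero,
        zero_add]
      have h5 : (∑ j : Fin r, M i (g j) * v j) = N.mulVec v i := by
        simp [hN, Matrix.mulVec, dotProduct]
      rw [h5, hvk]
      rfl
    obtain ⟨c, hc, -⟩ := hbasis β hMβ
    have hAc : A.mulVec c = 0 := by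
      funext j
      have h6 : A.mulVec c j = Q.mulVec c (f j) := by
        simp [hA, Matrix.mulVec, dotProduct]
      rw [h6, hc, hβ]
      simp [hesymmL]
    have hc0 : c = 0 := by
      have h7 : A.adjugate.mulVec (A.mulVec c) = A.det • c := by
        rw [Matrix.mulVec_mulVec, Matrix.adjugate_mul, Matrix.smul_mulVec,
          Matrix.one_mulVec]
      rw [hAc, Matrix.mulVec_zero] at h7
      have h8 := h7.symm
      rcases smul_eq_zero.1 h8 with h9 | h9
      · exact absurd h9 hd
      · exact h9
    apply hv0
    funext j
    have h10 : β (g j) = v j := by rw [hβ]; simp [hesymmR]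
    rw [← h10, ← hc, hc0, Matrix.mulVec_zero]
    rfl
  -- det N = ±1 by total unimodularity
  have hNTU := hTU r id g
  have hNsq : N.det = 1 ∨ N.det = -1 := by
    rcases hNTU with h | h | h
    · exact Or.inr h
    · exact absurd h hNdet
    · exact Or.inl h
  have hNN : N.det * N.det = 1 := by rcases hNsq with h | h <;> rw [h] <;> ring
  -- build, for each k, an integer kernel vector equal to the k-th unit vector on range f
  have hkey : ∀ k : Fin s, ∃ c : Fin s → ℤ, A.mulVec c = Pi.single k 1 := by
    intro k
    set w : Fin r → ℤ := fun i => M i (f k) with hw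
    set x : Fin r → ℤ := fun i => -(N.det * (N.adjugate.mulVec w) i) with hx
    have hNx : N.mulVec x = -w := by
      have h11 : x = (-N.det : ℤ) • (N.adjugate.mulVec w) := by
        funext i; simp [hx, neg_smul]
      rw [h11, Matrix.mulVec_smul, Matrix.mulVec_mulVec, Matrix.mul_adjugate,
        Matrix.smul_mulVec, Matrix.one_mulVec]
      funext i
      simp only [Pi.smul_apply, smul_eq_mul, Pi.neg_apply]
      rw [← mul_assoc]
      rw [neg_mul, hNN]
      ring
    set y : Fin m → ℤ := fun j => Sum.elim (Pi.single k 1 : Fin s → ℤ) x (e.symm j) with hy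
    have hMy : M.mulVec y = 0 := by
      funext i
      rw [hy, hmv (Sum.elim (Pi.single k 1 : Fin s → ℤ) x) i]
      simp only [Sum.elim_inl, Sum.elim_inr]
      have h12 : (∑ j : Fin s, M i (f j) * (Pi.single k 1 : Fin s → ℤ) j) = M i (f k) := by
        rw [Finset.sum_eq_single k]
        · simp
        · intro b _ hb
          rw [Pi.single_apply, if_neg hb, mul_zero]
        · intro hb; exact absurd (Finset.mem_univ k) hb
      have h13 : (∑ j : Fin r, M i (g j) * x j) = N.mulVec x i := by
        simp [hN, Matrix.mulVec, dotProduct]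
      rw [h12, h13, hNx]
      simp [hw]
    obtain ⟨c, hc, -⟩ := hbasis y hMy
    refine ⟨c, ?_⟩
    funext j
    have h14 : A.mulVec c j = Q.mulVec c (f j) := by
      simp [hA, Matrix.mulVec, dotProduct]
    rw [h14, hc, hy]
    simp [hesymmL]
  choose C hC using hkey
  set Cm : Matrix (Fin s) (Fin s) ℤ := fun i k => C k i with hCm
  have hAC : A * Cm = 1 := by
    funext j k
    have h15 : (A * Cm) j k = A.mulVec (C k) j := by
      simp [Matrix.mul_apply, Matrix.mulVec, dotProduct, hCm]
      rfl
    rw [h15, hC k]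
    rw [Pi.single_apply, Matrix.one_apply]
  have hdet1 : A.det * Cm.det = 1 := by
    rw [← Matrix.det_mul, hAC, Matrix.det_one]
  have hunit : IsUnit A.det := IsUnit.of_mul_eq_one _ hdet1
  rcases Int.isUnit_iff.1 hunit with h | h
  · exact Or.inr (Or.inr h)
  · exact Or.inl h
end
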